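/- arXiv:2006.16781 — 7 statements merged into one kernel-verified Lean document; each statement's English description precedes it below -/
import Mathlib

section
/- Let f : ℝⁿ → ℝ be convex and differentiable with ∇f Lipschitz continuous on ℝⁿ with constant L(f) > 0 for the Euclidean norm, let A be a q × n real matrix whose rows are linearly independent, and let b ∈ ℝ^q. Then the dual function θ(λ) = inf_{x ∈ ℝⁿ} [ f(x) + λᵀ(Ax − b) ], λ ∈ ℝ^q, is strongly concave on ℝ^q with constant of strong concavity λ_min(AAᵀ)/L(f) with respect to the Euclidean norm. -/
open scoped Matrix

/-- The smallest eigenvalue of a Hermitian real matrix. -/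
noncomputable def lambdaMin {q : ℕ} (M : Matrix (Fin q) (Fin q) ℝ)
    (hM : M.IsHermitian) : ℝ := ⨅ i, hM.eigenvalues i

open scoped RealInnerProductSpace

section aux

lemma descent_aux {n : ℕ} (f : EuclideanSpace ℝ (Fin n) → ℝ)
    (f' : EuclideanSpace ℝ (Fin n) → EuclideanSpace ℝ (Fin n))
    (hdiff : ∀ x, HasGradientAt f (f' x) x)
    (L : ℝ) (hL : 0 < L)
    (hLip : ∀ x y, ‖f' y - f' x‖ ≤ L * ‖y - x‖)
    (x y : EuclideanSpace ℝ (Fin n)) :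
    f y ≤ f x + ⟪f' x, y - x⟫ + L / 2 * ‖y - x‖ ^ 2 := by
  set d := y - x with hd
  set ψ : ℝ → ℝ := fun s => f (x + s • d) - s * ⟪f' x, d⟫ - L * s ^ 2 / 2 * ‖d‖ ^ 2 with hψ
  have hder : ∀ s : ℝ, HasDerivAt ψ
      (⟪f' (x + s • d), d⟫ - ⟪f' x, d⟫ - L * s * ‖d‖ ^ 2) s := by
    intro s
    have hc : HasDerivAt (fun s : ℝ => x + s • d) d s := by
      simpa using ((hasDerivAt_id s).smul_const d).const_add x
    have h1 : HasDerivAt (fun s : ℝ => f (x + s • d)) ⟪f' (x + s • d), d⟫ s := by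
      have := (hdiff (x + s • d)).hasFDerivAt.comp_hasDerivAt s hc
      simpa [InnerProductSpace.toDual_apply_apply, Function.comp_def] using this
    have h2 : HasDerivAt (fun s : ℝ => s * ⟪f' x, d⟫) ⟪f' x, d⟫ s := by
      simpa using (hasDerivAt_id s).mul_const ⟪f' x, d⟫
    have h3 : HasDerivAt (fun s : ℝ => L * s ^ 2 / 2 * ‖d‖ ^ 2)
        (L * s * ‖d‖ ^ 2) s := by
      have := ((hasDerivAt_pow 2 s).const_mul L).div_const 2 |>.mul_const (‖d‖ ^ 2)
      refine this.congr_deriv ?_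
      ring
    exact (h1.sub h2).sub h3
  have hanti : AntitoneOn ψ (Set.Icc 0 1) := by
    apply antitoneOn_of_deriv_nonpos (convex_Icc 0 1)
    · exact fun s hs => ((hder s).continuousAt).continuousWithinAt
    · exact fun s hs => ((hder s).differentiableAt).differentiableWithinAt
    · intro s hs
      rw [interior_Icc] at hs
      rw [(hder s).deriv]
      have h1 : ⟪f' (x + s • d), d⟫ - ⟪f' x, d⟫ = ⟪f' (x + s • d) - f' x, d⟫ := by
        rw [inner_sub_left]
      have h2 : ⟪f' (x + s • d) - f' x, d⟫ ≤ ‖f' (x + s • d) - f' x‖ * ‖d‖ :=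
        real_inner_le_norm _ _
      have h3 : ‖f' (x + s • d) - f' x‖ ≤ L * (s * ‖d‖) := by
        have := hLip x (x + s • d)
        simpa [norm_smul, abs_of_nonneg hs.1.le, mul_assoc] using this
      nlinarith [norm_nonneg d, norm_nonneg (f' (x + s • d) - f' x), hs.1.le]
  have := hanti (Set.left_mem_Icc.2 zero_le_one) (Set.right_mem_Icc.2 zero_le_one) zero_le_one
  simp only [hψ, zero_smul, add_zero, one_smul, zero_mul, one_mul] at this
  have hxy : x + d = y := by rw [hd]; abel
  rw [hxy] at this
  nlinarith [this]

lemma rayleigh_min' {q : ℕ} (M : Matrix (Fin q) (Fin q) ℝ) (hM : M.IsHermitian)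
    (μ : EuclideanSpace ℝ (Fin q)) :
    lambdaMin M hM * ‖μ‖ ^ 2 ≤ ⟪μ, (WithLp.toLp 2 (M.mulVec μ) : EuclideanSpace ℝ (Fin q))⟫ := by
  set B := hM.eigenvectorBasis with hB
  set c : Fin q → ℝ := fun i => B.repr μ i with hc
  have hrepr : (∑ i, c i • B i) = μ := B.sum_repr μ
  have hMμ : (WithLp.toLp 2 (M.mulVec μ) : EuclideanSpace ℝ (Fin q)) =
      ∑ i, (c i * hM.eigenvalues i) • (B i : EuclideanSpace ℝ (Fin q)) := by
    refine WithLp.ofLp_injective 2 ?_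
    simp only [WithLp.ofLp_toLp, WithLp.ofLp_sum, WithLp.ofLp_smul]
    have : M.mulVec μ = M.mulVec (∑ i, c i • (B i : Fin q → ℝ)) :=
      congrArg _ (by simpa [WithLp.ofLp_sum, WithLp.ofLp_smul] using congrArg WithLp.ofLp hrepr.symm)
    rw [this, ← M.mulVecLin_apply, map_sum]
    refine Finset.sum_congr rfl fun i _ => ?_
    rw [Matrix.mulVecLin_apply, Matrix.mulVec_smul]
    show c i • (M *ᵥ ⇑(B i)) = (c i * hM.eigenvalues i) • ⇑(B i)
    rw [hB, hM.mulVec_eigenvectorBasis, smul_smul, mul_comm]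
  have hinner : ⟪μ, (WithLp.toLp 2 (M.mulVec μ) : EuclideanSpace ℝ (Fin q))⟫ =
      ∑ i, hM.eigenvalues i * (c i) ^ 2 := by
    rw [hMμ, inner_sum]
    refine Finset.sum_congr rfl fun i _ => ?_
    rw [real_inner_smul_right, real_inner_comm, ← B.repr_apply_apply]
    ring
  have hnorm : ‖μ‖ ^ 2 = ∑ i, (c i) ^ 2 := by
    rw [← B.repr.norm_map μ, EuclideanSpace.norm_eq, Real.sq_sqrt (by positivity)]
    exact Finset.sum_congr rfl fun i _ => sq_abs _
  rw [hinner, hnorm, Finset.mul_sum]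
  refine Finset.sum_le_sum fun i _ => ?_
  have hle : lambdaMin M hM ≤ hM.eigenvalues i :=
    ciInf_le (Set.Finite.bddBelow (Set.finite_range _)) i
  nlinarith [sq_nonneg (c i)]

lemma dot_aux {n q : ℕ} (A : Matrix (Fin q) (Fin n) ℝ) (lam : Fin q → ℝ) (x : Fin n → ℝ) :
    ∑ i, lam i * A.mulVec x i = ∑ j, Aᵀ.mulVec lam j * x j := by
  simp only [Matrix.mulVec, dotProduct, Matrix.transpose_apply, Finset.mul_sum,
    Finset.sum_mul]
  rw [Finset.sum_comm]
  exact Finset.sum_congr rfl fun j _ => Finset.sum_congr rfl fun i _ => by ring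

lemma sum_lin {n q : ℕ} (A : Matrix (Fin q) (Fin n) ℝ) (b lam : EuclideanSpace ℝ (Fin q))
    (x : EuclideanSpace ℝ (Fin n)) :
    ∑ i, lam i * (A.mulVec x i - b i)
      = ⟪((WithLp.equiv 2 (Fin n → ℝ)).symm (Aᵀ.mulVec lam)), x⟫ - ⟪lam, b⟫ := by
  simp only [mul_sub, Finset.sum_sub_distrib, PiLp.inner_apply, RCLike.inner_apply,
    conj_trivial, WithLp.equiv_symm_apply, WithLp.ofLp_toLp, dot_aux A lam x]
  exact congrArg₂ _ (Finset.sum_congr rfl fun _ _ => mul_comm _ _)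
    (Finset.sum_congr rfl fun _ _ => mul_comm _ _)

lemma inner_AAT {n q : ℕ} (A : Matrix (Fin q) (Fin n) ℝ) (μ : EuclideanSpace ℝ (Fin q)) :
    ⟪μ, ((WithLp.equiv 2 (Fin q → ℝ)).symm ((A * Aᵀ).mulVec μ))⟫
      = ‖((WithLp.equiv 2 (Fin n → ℝ)).symm (Aᵀ.mulVec μ))‖ ^ 2 := by
  rw [← real_inner_self_eq_norm_sq]
  simp only [PiLp.inner_apply, RCLike.inner_apply, conj_trivial, WithLp.equiv_symm_apply,
    WithLp.ofLp_toLp, ← Matrix.mulVec_mulVec]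
  exact (Finset.sum_congr rfl fun _ _ => mul_comm _ _).trans (dot_aux A μ (Aᵀ.mulVec μ))

lemma convex_norm_sq_ineq {E : Type*} [NormedAddCommGroup E] [InnerProductSpace ℝ E]
    (v w : E) (t : ℝ) (h0 : 0 ≤ t) (h1 : t ≤ 1) :
    t * (1 - t) * ‖v - w‖ ^ 2 ≤ t * ‖v‖ ^ 2 + (1 - t) * ‖w‖ ^ 2 := by
  have h := real_inner_self_nonneg (x := t • v + (1 - t) • w)
  have e1 := norm_sub_sq_real v w
  have e2 : ⟪t • v + (1 - t) • w, t • v + (1 - t) • w⟫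
      = t ^ 2 * ‖v‖ ^ 2 + 2 * (t * (1 - t)) * ⟪v, w⟫ + (1 - t) ^ 2 * ‖w‖ ^ 2 := by
    simp only [inner_add_left, inner_add_right, real_inner_smul_left, real_inner_smul_right]
    simp only [real_inner_self_eq_norm_sq]
    rw [real_inner_comm w v]
    ring
  nlinarith [h, e1]

end aux

/-- If `f : ℝⁿ → ℝ` is convex, differentiable, with `L`-Lipschitz
gradient (`L > 0`), and the rows of `A` are linearly independent, then the dual
function `θ(λ) = inf_x [f(x) + λᵀ(Ax − b)]` is strongly concave on `ℝ^q` with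
constant `λ_min(AAᵀ)/L` for the Euclidean norm. -/
theorem dual_function_strongly_concave
    {n q : ℕ} (f : EuclideanSpace ℝ (Fin n) → ℝ)
    (f' : EuclideanSpace ℝ (Fin n) → EuclideanSpace ℝ (Fin n))
    (hconv : ConvexOn ℝ Set.univ f)
    (hdiff : ∀ x, HasGradientAt f (f' x) x)
    (L : ℝ) (hL : 0 < L)
    (hLip : ∀ x y, ‖f' y - f' x‖ ≤ L * ‖y - x‖)
    (A : Matrix (Fin q) (Fin n) ℝ)
    (hA : LinearIndependent ℝ A)
    (b : EuclideanSpace ℝ (Fin q))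
    (θ : EuclideanSpace ℝ (Fin q) → EReal)
    (hθ : θ = fun lam => ⨅ x : EuclideanSpace ℝ (Fin n),
      ((f x + ∑ i, lam i * (A.mulVec x i - b i) : ℝ) : EReal)) :
    ∀ l1 l2 : EuclideanSpace ℝ (Fin q), ∀ r1 r2 : ℝ,
      θ l1 = (r1 : EReal) → θ l2 = (r2 : EReal) →
      ∀ t : ℝ, 0 ≤ t → t ≤ 1 →
      ((t * r1 + (1 - t) * r2
        + (lambdaMin (A * Aᵀ) (Matrix.isHermitian_mul_conjTranspose_self A) / L)
          * (t * (1 - t)) / 2 * ‖l1 - l2‖ ^ 2 : ℝ) : EReal)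
        ≤ θ (t • l1 + (1 - t) • l2) := by
  intro l1 l2 r1 r2 h1 h2 t ht0 ht1
  subst hθ
  have ht1' : 0 ≤ 1 - t := by linarith
  set lam := lambdaMin (A * Aᵀ) (Matrix.isHermitian_mul_conjTranspose_self A) with hlam
  set a1 : EuclideanSpace ℝ (Fin n) := (WithLp.equiv 2 (Fin n → ℝ)).symm (Aᵀ.mulVec l1) with ha1
  set a2 : EuclideanSpace ℝ (Fin n) := (WithLp.equiv 2 (Fin n → ℝ)).symm (Aᵀ.mulVec l2) with ha2
  have hub : ∀ (l : EuclideanSpace ℝ (Fin q)) (r : ℝ),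
      (⨅ x : EuclideanSpace ℝ (Fin n),
        ((f x + ∑ i, l i * (A.mulVec x i - b i) : ℝ) : EReal)) = (r : EReal) →
      ∀ y, r ≤ f y + ∑ i, l i * (A.mulVec y i - b i) := by
    intro l r hr y
    have := iInf_le (fun x : EuclideanSpace ℝ (Fin n) =>
      ((f x + ∑ i, l i * (A.mulVec x i - b i) : ℝ) : EReal)) y
    rw [hr] at this
    exact_mod_cast this
  refine le_iInf fun x => ?_
  rw [EReal.coe_le_coe_iff]
  set v1 : EuclideanSpace ℝ (Fin n) := f' x + a1 with hv1
  set v2 : EuclideanSpace ℝ (Fin n) := f' x + a2 with hv2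
  have key : ∀ (l : EuclideanSpace ℝ (Fin q)) (r : ℝ) (a v : EuclideanSpace ℝ (Fin n)),
      v = f' x + a →
      (∀ y, r ≤ f y + (⟪a, y⟫ - ⟪l, b⟫)) →
      r ≤ f x + (⟪a, x⟫ - ⟪l, b⟫) - L⁻¹ / 2 * ‖v‖ ^ 2 := by
    intro l r a v hv hub'
    set y1 : EuclideanSpace ℝ (Fin n) := x - L⁻¹ • v with hy1
    have hu := hub' y1
    have hdes := descent_aux f f' hdiff L hL hLip x y1
    have e1 : y1 - x = -(L⁻¹ • v) := by rw [hy1]; abel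
    have e2 : ⟪f' x, y1 - x⟫ = -(L⁻¹ * ⟪f' x, v⟫) := by
      rw [e1, inner_neg_right, real_inner_smul_right]
    have e3 : ‖y1 - x‖ ^ 2 = L⁻¹ ^ 2 * ‖v‖ ^ 2 := by
      rw [e1, norm_neg, norm_smul, Real.norm_eq_abs, abs_of_nonneg (inv_nonneg.2 hL.le)]
      ring
    have e4 : ⟪a, y1⟫ = ⟪a, x⟫ - L⁻¹ * ⟪a, v⟫ := by
      rw [hy1, inner_sub_right, real_inner_smul_right]
    have e5 : L⁻¹ * ⟪f' x, v⟫ + L⁻¹ * ⟪a, v⟫ = L⁻¹ * ‖v‖ ^ 2 := by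
      rw [← mul_add, ← inner_add_left, ← hv, real_inner_self_eq_norm_sq]
    have hid : L / 2 * (L⁻¹ ^ 2 * ‖v‖ ^ 2) = L⁻¹ / 2 * ‖v‖ ^ 2 := by
      field_simp
    rw [e2, e3] at hdes
    rw [e4] at hu
    linarith [hu, hdes]
  have key1 : r1 ≤ f x + (⟪a1, x⟫ - ⟪l1, b⟫) - L⁻¹ / 2 * ‖v1‖ ^ 2 := by
    refine key l1 r1 a1 v1 hv1 fun y => ?_
    have := hub l1 r1 h1 y
    rwa [sum_lin] at this
  have key2 : r2 ≤ f x + (⟪a2, x⟫ - ⟪l2, b⟫) - L⁻¹ / 2 * ‖v2‖ ^ 2 := by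
    refine key l2 r2 a2 v2 hv2 fun y => ?_
    have := hub l2 r2 h2 y
    rwa [sum_lin] at this
  -- rewrite the target sum
  rw [sum_lin]
  have hat : (WithLp.equiv 2 (Fin n → ℝ)).symm (Aᵀ.mulVec (t • l1 + (1 - t) • l2 : EuclideanSpace ℝ (Fin q)))
      = t • a1 + (1 - t) • a2 := by
    ext j
    simp only [ha1, ha2, WithLp.equiv_symm_apply, WithLp.ofLp_toLp, PiLp.add_apply, PiLp.smul_apply,
      WithLp.ofLp_add, WithLp.ofLp_smul, Pi.add_apply, Pi.smul_apply,
      smul_eq_mul, Matrix.mulVec, dotProduct, Finset.mul_sum,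
      ← Finset.sum_add_distrib]
    exact Finset.sum_congr rfl fun i _ => by ring
  rw [hat]
  have hsub : v1 - v2 = (WithLp.equiv 2 (Fin n → ℝ)).symm (Aᵀ.mulVec (l1 - l2 : EuclideanSpace ℝ (Fin q))) := by
    rw [hv1, hv2, add_sub_add_left_eq_sub]
    ext j
    simp only [ha1, ha2, WithLp.equiv_symm_apply, WithLp.ofLp_toLp, PiLp.sub_apply,
      WithLp.ofLp_sub, Pi.sub_apply,
      Matrix.mulVec, dotProduct, mul_sub, ← Finset.sum_sub_distrib]
  have hray : lam * ‖l1 - l2‖ ^ 2 ≤ ‖v1 - v2‖ ^ 2 := by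
    rw [hsub]
    exact (rayleigh_min' (A * Aᵀ) (Matrix.isHermitian_mul_conjTranspose_self A)
      (l1 - l2)).trans_eq (inner_AAT A (l1 - l2))
  have hcomb := convex_norm_sq_ineq v1 v2 t ht0 ht1
  have htt : 0 ≤ t * (1 - t) := mul_nonneg ht0 ht1'
  have hδ : lam / L * (t * (1 - t)) / 2 * ‖l1 - l2‖ ^ 2
      ≤ t * (L⁻¹ / 2 * ‖v1‖ ^ 2) + (1 - t) * (L⁻¹ / 2 * ‖v2‖ ^ 2) := by
    have h8 : t * (1 - t) * (lam * ‖l1 - l2‖ ^ 2) ≤ t * ‖v1‖ ^ 2 + (1 - t) * ‖v2‖ ^ 2 :=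
      (mul_le_mul_of_nonneg_left hray htt).trans hcomb
    have h9 := mul_le_mul_of_nonneg_left h8 (by positivity : (0:ℝ) ≤ L⁻¹ / 2)
    calc lam / L * (t * (1 - t)) / 2 * ‖l1 - l2‖ ^ 2
        = L⁻¹ / 2 * (t * (1 - t) * (lam * ‖l1 - l2‖ ^ 2)) := by
          rw [div_eq_mul_inv lam L]; ring
      _ ≤ L⁻¹ / 2 * (t * ‖v1‖ ^ 2 + (1 - t) * ‖v2‖ ^ 2) := h9
      _ = t * (L⁻¹ / 2 * ‖v1‖ ^ 2) + (1 - t) * (L⁻¹ / 2 * ‖v2‖ ^ 2) := by ring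
  set G1 : ℝ := f x + (⟪a1, x⟫ - ⟪l1, b⟫) with hG1
  set G2 : ℝ := f x + (⟪a2, x⟫ - ⟪l2, b⟫) with hG2
  have k1 : t * r1 ≤ t * G1 - t * (L⁻¹ / 2 * ‖v1‖ ^ 2) := by
    calc t * r1 ≤ t * (G1 - L⁻¹ / 2 * ‖v1‖ ^ 2) := mul_le_mul_of_nonneg_left key1 ht0
      _ = t * G1 - t * (L⁻¹ / 2 * ‖v1‖ ^ 2) := by ring
  have k2 : (1 - t) * r2 ≤ (1 - t) * G2 - (1 - t) * (L⁻¹ / 2 * ‖v2‖ ^ 2) := by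
    calc (1 - t) * r2 ≤ (1 - t) * (G2 - L⁻¹ / 2 * ‖v2‖ ^ 2) :=
        mul_le_mul_of_nonneg_left key2 ht1'
      _ = (1 - t) * G2 - (1 - t) * (L⁻¹ / 2 * ‖v2‖ ^ 2) := by ring
  have hrhs : f x + (⟪t • a1 + (1 - t) • a2, x⟫ - ⟪t • l1 + (1 - t) • l2, b⟫)
      = t * G1 + (1 - t) * G2 := by
    rw [inner_add_left, inner_add_left, real_inner_smul_left, real_inner_smul_left,
      real_inner_smul_left, real_inner_smul_left, hG1, hG2]
    ring
  rw [hrhs]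
  linarith [k1, k2, hδ]
end

section
/- Let h : ℝⁿ → ℝ ∪ {+∞} be strongly convex on ℝⁿ with constant of strong convexity α > 0 with respect to the Euclidean norm, and let A be a q × n real matrix whose rows are linearly independent. Then the function λ ↦ h(−Aᵀλ) is strongly convex on ℝ^q with constant of strong convexity α·λ_min(AAᵀ) with respect to the Euclidean norm. -/
open scoped Matrix

set_option linter.unusedVariables false

lemma key {q : ℕ} (M : Matrix (Fin q) (Fin q) ℝ) (hM : M.IsHermitian)
    (v : EuclideanSpace ℝ (Fin q)) :
    lambdaMin M hM * (v ⬝ᵥ v) ≤ v ⬝ᵥ (M *ᵥ v) := by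
  classical
  set b := hM.eigenvectorBasis with hb
  have hinner : ∀ x y : EuclideanSpace ℝ (Fin q), (inner ℝ x y : ℝ) = x ⬝ᵥ y := by
    intro x y
    simp [PiLp.inner_apply, dotProduct, mul_comm]
  have hMT : Mᵀ = M := by
    have := hM.eq
    simpa [Matrix.conjTranspose_eq_transpose_of_trivial] using hM.eq
  have hsymm : ∀ i, (inner ℝ (b i) (WithLp.toLp 2 (M *ᵥ v)) : ℝ)
      = hM.eigenvalues i * inner ℝ (b i) v := by
    intro i
    have h3 : M *ᵥ b i = hM.eigenvalues i • (b i : Fin q → ℝ) :=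
      hM.mulVec_eigenvectorBasis i
    rw [hinner, hinner, WithLp.ofLp_toLp, Matrix.dotProduct_mulVec, ← Matrix.mulVec_transpose, hMT, h3]
    simp [dotProduct, Finset.mul_sum, mul_comm, mul_left_comm]
  have e1 : v ⬝ᵥ (M *ᵥ v) = ∑ i, hM.eigenvalues i * (inner ℝ (b i) v : ℝ) ^ 2 := by
    rw [show M *ᵥ v.ofLp = (WithLp.toLp 2 (M *ᵥ v.ofLp)).ofLp from rfl]
    rw [← hinner v (WithLp.toLp 2 (M *ᵥ v))]
    rw [← b.sum_inner_mul_inner v (WithLp.toLp 2 (M *ᵥ v))]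
    refine Finset.sum_congr rfl fun i _ => ?_
    rw [hsymm i, real_inner_comm v (b i)]
    ring
  have e2 : v ⬝ᵥ v = ∑ i, (inner ℝ (b i) v : ℝ) ^ 2 := by
    rw [← hinner v v, ← b.sum_inner_mul_inner v v]
    refine Finset.sum_congr rfl fun i _ => ?_
    rw [real_inner_comm v (b i)]; ring
  rw [e1, e2, Finset.mul_sum]
  refine Finset.sum_le_sum fun i _ => ?_
  have hle : lambdaMin M hM ≤ hM.eigenvalues i := by
    exact ciInf_le (Finite.bddBelow_range _) i
  nlinarith [sq_nonneg (inner ℝ (b i) v : ℝ)]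

/-- If `h : ℝⁿ → ℝ ∪ {+∞}` is strongly convex on `ℝⁿ` with constant
`α > 0` (Euclidean norm) and the rows of `A` are linearly independent, then
`λ ↦ h(−Aᵀλ)` is strongly convex on `ℝ^q` with constant `α·λ_min(AAᵀ)`. -/
theorem comp_neg_transpose_strongly_convex
    {n q : ℕ} (h : EuclideanSpace ℝ (Fin n) → EReal)
    (hne_bot : ∀ x, h x ≠ ⊥)
    (α : ℝ) (hα : 0 < α)
    (hsc : ∀ x y : EuclideanSpace ℝ (Fin n), h x ≠ ⊤ → h y ≠ ⊤ →
      ∀ t : ℝ, 0 ≤ t → t ≤ 1 →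
      h (t • x + (1 - t) • y)
        ≤ ((t * (h x).toReal + (1 - t) * (h y).toReal
            - α * (t * (1 - t)) / 2 * ‖y - x‖ ^ 2 : ℝ) : EReal))
    (A : Matrix (Fin q) (Fin n) ℝ)
    (hA : LinearIndependent ℝ A) :
    ∀ l1 l2 : EuclideanSpace ℝ (Fin q),
      h (WithLp.toLp 2 (fun j => -(Aᵀ.mulVec l1 j))) ≠ ⊤ → h (WithLp.toLp 2 (fun j => -(Aᵀ.mulVec l2 j))) ≠ ⊤ →
      ∀ t : ℝ, 0 ≤ t → t ≤ 1 →
      h (WithLp.toLp 2 (fun j => -(Aᵀ.mulVec (t • l1 + (1 - t) • l2) j)))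
        ≤ ((t * (h (WithLp.toLp 2 (fun j => -(Aᵀ.mulVec l1 j)))).toReal
            + (1 - t) * (h (WithLp.toLp 2 (fun j => -(Aᵀ.mulVec l2 j)))).toReal
            - (α * lambdaMin (A * Aᵀ) (Matrix.isHermitian_mul_conjTranspose_self A))
              * (t * (1 - t)) / 2 * ‖l1 - l2‖ ^ 2 : ℝ) : EReal) := by
  intro l1 l2 h1 h2 t ht0 ht1
  classical
  set x : EuclideanSpace ℝ (Fin n) := WithLp.toLp 2 (fun j => -(Aᵀ.mulVec l1 j)) with hx
  set y : EuclideanSpace ℝ (Fin n) := WithLp.toLp 2 (fun j => -(Aᵀ.mulVec l2 j)) with hy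
  set v : EuclideanSpace ℝ (Fin q) := l1 - l2 with hv
  have harg : WithLp.toLp 2 (fun j => -(Aᵀ.mulVec (t • l1 + (1 - t) • l2) j))
      = (t • x + (1 - t) • y : EuclideanSpace ℝ (Fin n)) := by
    ext j
    show -(Aᵀ.mulVec (t • l1 + (1 - t) • l2) j) = t * x j + (1 - t) * y j
    rw [Matrix.mulVec_add, Matrix.mulVec_smul, Matrix.mulVec_smul]
    simp [hx, hy]
    ring
  have hyx : (y - x : EuclideanSpace ℝ (Fin n)) = WithLp.toLp 2 (fun j => Aᵀ.mulVec v j) := by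
    ext j
    show y j - x j = Aᵀ.mulVec v j
    simp only [hx, hy, hv, Matrix.mulVec, dotProduct, PiLp.sub_apply, mul_sub,
      Finset.sum_sub_distrib]
    ring_nf
  have hnorm1 : ‖l1 - l2‖ ^ 2 = v ⬝ᵥ v := by
    rw [hv, EuclideanSpace.norm_eq, Real.sq_sqrt (by positivity)]
    simp [dotProduct, sq]
  have hnorm2 : ‖y - x‖ ^ 2 = v ⬝ᵥ ((A * Aᵀ) *ᵥ v) := by
    rw [hyx, EuclideanSpace.norm_eq, Real.sq_sqrt (by positivity)]
    have : ∑ i, ‖Aᵀ.mulVec v i‖ ^ 2 = (Aᵀ *ᵥ v) ⬝ᵥ (Aᵀ *ᵥ v) := by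
      simp [dotProduct, sq]
    rw [this, Matrix.dotProduct_mulVec, Matrix.vecMul_transpose, Matrix.mulVec_mulVec,
      dotProduct_comm]
  have hkey := key (A * Aᵀ) (Matrix.isHermitian_mul_conjTranspose_self A) v
  refine le_trans (harg ▸ hsc x y h1 h2 t ht0 ht1) ?_
  rw [EReal.coe_le_coe_iff]
  rw [hnorm1, hnorm2]
  have htt : 0 ≤ t * (1 - t) := mul_nonneg ht0 (by linarith)
  nlinarith [mul_le_mul_of_nonneg_left hkey (mul_nonneg hα.le htt)]
end

section
/- Let f : ℝⁿ → ℝ be convex and differentiable with ∇f Lipschitz continuous on ℝⁿ with constant L(f) > 0 for the Euclidean norm, let A be a q × n real matrix whose rows are linearly independent, and let b ∈ ℝ^q. Let θ(λ) = inf_{x ∈ ℝⁿ} [ f(x) + λᵀ(Ax − b) ]. Then for any λ₁, λ₂ in the relative interior of dom(−θ) and any subgradients s₁ ∈ ∂(−θ)(λ₁), s₂ ∈ ∂(−θ)(λ₂), one has ⟨s₂ − s₁, λ₂ − λ₁⟩ ≥ (λ_min(AAᵀ)/L(f))·‖λ₂ − λ₁‖₂². -/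
open scoped Matrix RealInnerProductSpace


lemma lambdaMin_mul_le {q : ℕ} (M : Matrix (Fin q) (Fin q) ℝ) (hM : M.IsHermitian)
    (v : EuclideanSpace ℝ (Fin q)) :
    lambdaMin M hM * ‖v‖ ^ 2 ≤ ∑ i, v i * M.mulVec v i := by
  rcases Nat.eq_zero_or_pos q with hq | hq
  · subst hq; simp [lambdaMin, Real.iInf_of_isEmpty, norm_eq_zero]
  have : Nonempty (Fin q) := ⟨⟨0, hq⟩⟩
  set B := hM.eigenvectorBasis with hB
  set T := Matrix.toEuclideanLin M with hT
  have hsym : T.IsSymmetric := (Matrix.isHermitian_iff_isSymmetric.1 hM)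
  have hTB : ∀ i, T (B i) = hM.eigenvalues i • B i := by
    intro i
    apply (WithLp.equiv 2 _).injective
    ext j
    have := congrFun (hM.mulVec_eigenvectorBasis i) j
    simpa [hT, hB, Matrix.toEuclideanLin_apply] using this
  have hsum : ∑ i, v i * M.mulVec v i = ⟪v, T v⟫ := by
    rw [PiLp.inner_apply]
    simp only [hT, Matrix.toEuclideanLin_apply, RCLike.inner_apply, conj_trivial]
    exact Finset.sum_congr rfl fun _ _ => mul_comm _ _
  have hexp : ⟪v, T v⟫ = ∑ i, hM.eigenvalues i * ⟪v, B i⟫ ^ 2 := by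
    rw [← B.sum_inner_mul_inner v (T v)]
    congr 1; funext i
    rw [← hsym (B i) v, hTB i, inner_smul_left, conj_trivial,
      real_inner_comm (B i) v]
    ring
  have hnorm : ‖v‖ ^ 2 = ∑ i, ⟪v, B i⟫ ^ 2 := by
    have := B.sum_inner_mul_inner v v
    rw [real_inner_self_eq_norm_sq] at this
    rw [← this]
    congr 1; funext i
    rw [real_inner_comm (B i) v]; ring
  rw [hsum, hexp, hnorm, Finset.mul_sum]
  apply Finset.sum_le_sum
  intro i _
  have h1 : lambdaMin M hM ≤ hM.eigenvalues i :=
    ciInf_le (Finite.bddBelow_range _) i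
  nlinarith [sq_nonneg (⟪v, B i⟫ : ℝ)]

lemma descent {n : ℕ} (f : EuclideanSpace ℝ (Fin n) → ℝ)
    (f' : EuclideanSpace ℝ (Fin n) → EuclideanSpace ℝ (Fin n))
    (hdiff : ∀ x, HasGradientAt f (f' x) x)
    (L : ℝ)
    (hLip : ∀ x y, ‖f' y - f' x‖ ≤ L * ‖y - x‖) (x y : EuclideanSpace ℝ (Fin n)) :
    f y ≤ f x + ⟪f' x, y - x⟫ + L / 2 * ‖y - x‖ ^ 2 := by
  set v := y - x with hv
  set φ : ℝ → ℝ := fun t => L / 2 * t ^ 2 * ‖v‖ ^ 2 - f (x + t • v) + t * ⟪f' x, v⟫ with hφ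
  have key : ∀ t : ℝ, HasDerivAt φ
      (L * t * ‖v‖ ^ 2 - ⟪f' (x + t • v), v⟫ + ⟪f' x, v⟫) t := by
    intro t
    have h1 : HasDerivAt (fun t : ℝ => x + t • v) v t := by
      simpa using ((hasDerivAt_id t).smul_const v).const_add x
    have h2 : HasDerivAt (fun t : ℝ => f (x + t • v)) ⟪f' (x + t • v), v⟫ t := by
      have := ((hdiff (x + t • v)).hasFDerivAt.comp_hasDerivAt t h1)
      simpa [InnerProductSpace.toDual_apply_apply, Function.comp_def] using this
    have h3 : HasDerivAt (fun t : ℝ => L / 2 * t ^ 2 * ‖v‖ ^ 2) (L * t * ‖v‖ ^ 2) t := by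
      have := ((hasDerivAt_pow 2 t).const_mul (L / 2)).mul_const (‖v‖ ^ 2)
      convert this using 1
      · rfl
      · rfl
      · norm_num
        exact Or.inl (by ring)
    have h4 : HasDerivAt (fun t : ℝ => t * ⟪f' x, v⟫) ⟪f' x, v⟫ t := by
      simpa using (hasDerivAt_id t).mul_const (⟪f' x, v⟫ : ℝ)
    exact (h3.sub h2).add h4
  have hmono : MonotoneOn φ (Set.Icc 0 1) := by
    apply monotoneOn_of_deriv_nonneg (convex_Icc 0 1)
    · exact (fun t _ => ((key t).differentiableAt).continuousAt.continuousWithinAt)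
    · intro t ht
      exact ((key t).differentiableAt).differentiableWithinAt
    · intro t ht
      rw [(key t).deriv]
      simp only [interior_Icc, Set.mem_Ioo] at ht
      have hcs : ⟪f' (x + t • v) - f' x, v⟫ ≤ ‖f' (x + t • v) - f' x‖ * ‖v‖ :=
        real_inner_le_norm _ _
      have hlip : ‖f' (x + t • v) - f' x‖ ≤ L * (t * ‖v‖) := by
        have := hLip x (x + t • v)
        simpa [norm_smul, abs_of_pos ht.1] using this
      have h5 : ‖f' (x + t • v) - f' x‖ * ‖v‖ ≤ L * t * ‖v‖ ^ 2 := by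
        nlinarith [norm_nonneg v, norm_nonneg (f' (x + t • v) - f' x)]
      have h0 : ⟪f' (x + t • v), v⟫ - ⟪f' x, v⟫ ≤ L * t * ‖v‖ ^ 2 := by
        have h6 := le_trans hcs h5
        rw [inner_sub_left] at h6
        linarith
      linarith
  have h01 : φ 0 ≤ φ 1 := hmono (by norm_num) (by norm_num) (by norm_num)
  have e0 : φ 0 = -f x := by simp [hφ]
  have e1 : φ 1 = L / 2 * ‖v‖ ^ 2 - f y + ⟪f' x, v⟫ := by
    simp [hφ, hv]
  rw [e0, e1] at h01
  linarith

lemma mix_norm {E : Type*} [NormedAddCommGroup E] [InnerProductSpace ℝ E]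
    (a b : E) (t : ℝ) (h0 : 0 ≤ t) (h1 : t ≤ 1) :
    t * (1 - t) * ‖a - b‖ ^ 2 ≤ (1 - t) * ‖a‖ ^ 2 + t * ‖b‖ ^ 2 := by
  have e1 : ‖a - b‖ ^ 2 = ‖a‖ ^ 2 - 2 * ⟪a, b⟫ + ‖b‖ ^ 2 := norm_sub_sq_real a b
  have e2 : (0:ℝ) ≤ ‖(1 - t) • a + t • b‖ ^ 2 := sq_nonneg _
  have e3 : ‖(1 - t) • a + t • b‖ ^ 2
      = (1 - t) ^ 2 * ‖a‖ ^ 2 + 2 * (t * (1 - t)) * ⟪a, b⟫ + t ^ 2 * ‖b‖ ^ 2 := by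
    rw [norm_add_sq_real, inner_smul_left, inner_smul_right, norm_smul, norm_smul,
      conj_trivial, Real.norm_eq_abs, Real.norm_eq_abs, abs_of_nonneg h0,
      abs_of_nonneg (by linarith : (0:ℝ) ≤ 1 - t)]
    ring
  nlinarith [e2, e3]

/-- Strengthened subgradient inequality from strong concavity of θ. -/
lemma strengthen {q : ℕ} (θ : EuclideanSpace ℝ (Fin q) → EReal) (σ : ℝ)
    (htop : ∀ lam, θ lam ≠ ⊤)
    (hconc : ∀ (lam1 lam2 : EuclideanSpace ℝ (Fin q)) (r1 r2 t : ℝ), 0 ≤ t → t ≤ 1 →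
      θ lam1 = (r1 : EReal) → θ lam2 = (r2 : EReal) →
      (((1 - t) * r1 + t * r2 + σ / 2 * t * (1 - t) * ‖lam2 - lam1‖ ^ 2 : ℝ) : EReal)
        ≤ θ ((1 - t) • lam1 + t • lam2))
    (la lb : EuclideanSpace ℝ (Fin q)) (ra rb : ℝ)
    (hra : θ la = (ra : EReal)) (hrb : θ lb = (rb : EReal))
    (s : EuclideanSpace ℝ (Fin q))
    (hs : ∀ mu, ((∑ i, s i * (mu i - la i) : ℝ) : EReal) ≤ (- θ mu) - (- θ la)) :
    (∑ i, s i * (lb i - la i)) + σ / 2 * ‖lb - la‖ ^ 2 ≤ ra - rb := by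
  set p : ℝ := ∑ i, s i * (lb i - la i) with hp
  set D : ℝ := ‖lb - la‖ ^ 2 with hD
  have main : ∀ t ∈ Set.Ioo (0:ℝ) 1, p + σ / 2 * D ≤ (ra - rb) + σ / 2 * D * t := by
    intro t ht
    set mu : EuclideanSpace ℝ (Fin q) := (1 - t) • la + t • lb with hmu
    have h1 : (((1 - t) * ra + t * rb + σ / 2 * t * (1 - t) * D : ℝ) : EReal) ≤ θ mu :=
      hconc la lb ra rb t (le_of_lt ht.1) (le_of_lt ht.2) hra hrb
    have hbot : θ mu ≠ ⊥ := by
      intro h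
      rw [h] at h1
      exact (EReal.coe_ne_bot _) (le_bot_iff.1 h1)
    set u : ℝ := (θ mu).toReal with hu
    have hmu_eq : θ mu = (u : EReal) := (EReal.coe_toReal (htop mu) hbot).symm
    have hcu : (1 - t) * ra + t * rb + σ / 2 * t * (1 - t) * D ≤ u := by
      rw [hmu_eq] at h1
      exact_mod_cast h1
    have h2 := hs mu
    have hsum : ∑ i, s i * (mu i - la i) = t * p := by
      rw [hp, Finset.mul_sum]
      apply Finset.sum_congr rfl
      intro i _
      have : mu i = (1 - t) * la i + t * lb i := by
        simp [hmu, PiLp.add_apply, PiLp.smul_apply, smul_eq_mul]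
      rw [this]; ring
    rw [hsum, hmu_eq, hra] at h2
    have h3 : ((t * p : ℝ) : EReal) ≤ ((ra - u : ℝ) : EReal) := by
      convert h2 using 1
      rw [← EReal.coe_neg, ← EReal.coe_neg, ← EReal.coe_sub]
      norm_num
      rw [sub_eq_add_neg, add_comm]
    have h4 : t * p ≤ ra - u := by exact_mod_cast h3
    have h5 : t * p ≤ t * ((ra - rb) - σ / 2 * (1 - t) * D) := by nlinarith
    have h6 : p ≤ (ra - rb) - σ / 2 * (1 - t) * D :=
      le_of_mul_le_mul_left (by linarith) ht.1
    nlinarith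
  have tend : Filter.Tendsto (fun t : ℝ => (ra - rb) + σ / 2 * D * t)
      (nhdsWithin 0 (Set.Ioi 0)) (nhds (ra - rb)) := by
    have : Filter.Tendsto (fun t : ℝ => (ra - rb) + σ / 2 * D * t) (nhds 0)
        (nhds ((ra - rb) + σ / 2 * D * 0)) := by
      exact (continuous_const.add (continuous_const.mul continuous_id)).tendsto 0
    simpa using this.mono_left nhdsWithin_le_nhds
  refine ge_of_tendsto tend ?_
  filter_upwards [Ioo_mem_nhdsGT_of_mem (Set.mem_Ico.2 ⟨le_refl 0, zero_lt_one⟩)] with t ht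
  exact main t ht

lemma combine (r1 r2 t fx S1 S2 G1 G2 Gd Dq lmin L σ : ℝ) (hL : 0 < L)
    (hσ : σ = lmin / L) (ht0 : 0 ≤ t) (ht1 : t ≤ 1)
    (k1 : r1 ≤ fx + S1 - 1/(2*L)*G1) (k2 : r2 ≤ fx + S2 - 1/(2*L)*G2)
    (hmix : t*(1-t)*Gd ≤ (1-t)*G1 + t*G2) (heig : lmin*Dq ≤ Gd) :
    (1-t)*r1 + t*r2 + σ/2*t*(1-t)*Dq ≤ fx + ((1-t)*S1 + t*S2) := by
  have h1t : (0:ℝ) ≤ 1 - t := by linarith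
  have hc : (0:ℝ) ≤ 1 / (2 * L) := by positivity
  have K1 := mul_le_mul_of_nonneg_left k1 h1t
  have K2 := mul_le_mul_of_nonneg_left k2 ht0
  have Hmix2 := mul_le_mul_of_nonneg_left hmix hc
  have hfac : (0:ℝ) ≤ t * (1 - t) * (1 / (2 * L)) :=
    mul_nonneg (mul_nonneg ht0 h1t) hc
  have Heig2 := mul_le_mul_of_nonneg_left heig hfac
  have hid : σ / 2 * t * (1 - t) * Dq
      = t * (1 - t) * (1 / (2 * L)) * (lmin * Dq) := by
    rw [hσ]; field_simp
  linarith [K1, K2, Hmix2, Heig2]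

lemma vecMul_dot {q n : ℕ} (A : Matrix (Fin q) (Fin n) ℝ) (lam : Fin q → ℝ) (v : Fin n → ℝ) :
    ∑ j, Matrix.vecMul lam A j * v j = ∑ i, lam i * Matrix.mulVec A v i := by
  simp only [Matrix.vecMul, Matrix.mulVec, dotProduct, Finset.sum_mul, Finset.mul_sum]
  rw [Finset.sum_comm]
  exact Finset.sum_congr rfl fun j _ => Finset.sum_congr rfl fun i _ => by ring

/-- Under (H1)-(H2), for `λ₁, λ₂` in the relative interior of
`dom(−θ)` and subgradients `sᵢ ∈ ∂(−θ)(λᵢ)`, one has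
`⟨s₂ − s₁, λ₂ − λ₁⟩ ≥ (λ_min(AAᵀ)/L)‖λ₂ − λ₁‖₂²`. -/
theorem subgradients_of_neg_dual_strongly_monotone
    {n q : ℕ} (f : EuclideanSpace ℝ (Fin n) → ℝ)
    (f' : EuclideanSpace ℝ (Fin n) → EuclideanSpace ℝ (Fin n))
    (hconv : ConvexOn ℝ Set.univ f)
    (hdiff : ∀ x, HasGradientAt f (f' x) x)
    (L : ℝ) (hL : 0 < L)
    (hLip : ∀ x y, ‖f' y - f' x‖ ≤ L * ‖y - x‖)
    (A : Matrix (Fin q) (Fin n) ℝ)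
    (hA : LinearIndependent ℝ A)
    (b : EuclideanSpace ℝ (Fin q))
    (θ : EuclideanSpace ℝ (Fin q) → EReal)
    (hθ : θ = fun lam => ⨅ x : EuclideanSpace ℝ (Fin n),
      ((f x + ∑ i, lam i * (A.mulVec x i - b i) : ℝ) : EReal)) :
    ∀ l1 ∈ intrinsicInterior ℝ {lam : EuclideanSpace ℝ (Fin q) | θ lam ≠ ⊥},
    ∀ l2 ∈ intrinsicInterior ℝ {lam : EuclideanSpace ℝ (Fin q) | θ lam ≠ ⊥},
    ∀ s1 s2 : EuclideanSpace ℝ (Fin q),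
      (∀ mu : EuclideanSpace ℝ (Fin q),
        ((∑ i, s1 i * (mu i - l1 i) : ℝ) : EReal) ≤ (- θ mu) - (- θ l1)) →
      (∀ mu : EuclideanSpace ℝ (Fin q),
        ((∑ i, s2 i * (mu i - l2 i) : ℝ) : EReal) ≤ (- θ mu) - (- θ l2)) →
      (lambdaMin (A * Aᵀ) (Matrix.isHermitian_mul_conjTranspose_self A) / L)
          * ‖l2 - l1‖ ^ 2
        ≤ ∑ i, (s2 i - s1 i) * (l2 i - l1 i) := by
  intro l1 hl1 l2 hl2 s1 s2 hs1 hs2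
  set lmin : ℝ := lambdaMin (A * Aᵀ) (Matrix.isHermitian_mul_conjTranspose_self A) with hlmin
  set σ : ℝ := lmin / L with hσ
  set ATv : EuclideanSpace ℝ (Fin q) → EuclideanSpace ℝ (Fin n) :=
    fun lam => (WithLp.equiv 2 (Fin n → ℝ)).symm (Matrix.vecMul lam A) with hATv
  have hATapp : ∀ (lam : EuclideanSpace ℝ (Fin q)) (j : Fin n),
      ATv lam j = Matrix.vecMul lam A j := fun lam j => rfl
  -- θ is never ⊤
  have htop : ∀ lam, θ lam ≠ ⊤ := by
    intro lam
    have h1 : θ lam ≤ ((f 0 + ∑ i, lam i * (A.mulVec 0 i - b i) : ℝ) : EReal) := by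
      rw [hθ]; exact iInf_le _ 0
    exact ne_top_of_le_ne_top (EReal.coe_ne_top _) h1
  -- the key upper bound on θ
  have hkey : ∀ (lam : EuclideanSpace ℝ (Fin q)) (x : EuclideanSpace ℝ (Fin n)),
      θ lam ≤ (((f x + ∑ i, lam i * (A.mulVec x i - b i))
        - 1 / (2 * L) * ‖f' x + ATv lam‖ ^ 2 : ℝ) : EReal) := by
    intro lam x
    set g : EuclideanSpace ℝ (Fin n) := f' x + ATv lam with hg
    set y : EuclideanSpace ℝ (Fin n) := x - (1 / L) • g with hy
    have h1 : θ lam ≤ ((f y + ∑ i, lam i * (A.mulVec y i - b i) : ℝ) : EReal) := by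
      rw [hθ]; exact iInf_le _ y
    refine le_trans h1 (EReal.coe_le_coe_iff.2 ?_)
    have hyx : y - x = -((1 / L) • g) := by rw [hy]; abel
    have hd := descent f f' hdiff L hLip x y
    have hlin : ∑ i, lam i * (A.mulVec y i - b i)
        = ∑ i, lam i * (A.mulVec x i - b i) + ⟪ATv lam, y - x⟫ := by
      have e1 : ⟪ATv lam, y - x⟫ = ∑ j, Matrix.vecMul lam A j * (y - x) j := by
        rw [PiLp.inner_apply]
        simp [RCLike.inner_apply, hATv, WithLp.equiv_symm_apply]
        exact Finset.sum_congr rfl fun _ _ => mul_comm _ _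
      rw [e1, vecMul_dot A lam (y - x).ofLp]
      have e2 : ∀ i, Matrix.mulVec A (y - x) i = A.mulVec y i - A.mulVec x i := by
        intro i; rw [Matrix.mulVec_sub]; rfl
      rw [← Finset.sum_add_distrib]
      refine Finset.sum_congr rfl fun i _ => ?_
      rw [WithLp.ofLp_sub (x := y) (y := x), e2 i]; ring
    have hinner : ⟪f' x, y - x⟫ + ⟪ATv lam, y - x⟫ = -(1 / L) * ‖g‖ ^ 2 := by
      rw [← inner_add_left, ← hg, hyx, inner_neg_right, inner_smul_right,
        real_inner_self_eq_norm_sq]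
      ring
    have hnorm2 : ‖y - x‖ ^ 2 = (1 / L) ^ 2 * ‖g‖ ^ 2 := by
      rw [hyx, norm_neg, norm_smul, Real.norm_eq_abs,
        abs_of_nonneg (by positivity : (0:ℝ) ≤ 1 / L)]
      ring
    have harith : -(1 / L) * ‖g‖ ^ 2 + L / 2 * ((1 / L) ^ 2 * ‖g‖ ^ 2)
        = -(1 / (2 * L)) * ‖g‖ ^ 2 := by
      field_simp
      ring
    rw [hlin]
    rw [hnorm2] at hd
    nlinarith [hd, hinner, harith]
  -- strong concavity of θ
  have hconc : ∀ (lam1 lam2 : EuclideanSpace ℝ (Fin q)) (r1 r2 t : ℝ), 0 ≤ t → t ≤ 1 →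
      θ lam1 = (r1 : EReal) → θ lam2 = (r2 : EReal) →
      (((1 - t) * r1 + t * r2 + σ / 2 * t * (1 - t) * ‖lam2 - lam1‖ ^ 2 : ℝ) : EReal)
        ≤ θ ((1 - t) • lam1 + t • lam2) := by
    intro lam1 lam2 r1 r2 t ht0 ht1 h1 h2
    rw [hθ]
    refine le_iInf fun x => EReal.coe_le_coe_iff.2 ?_
    have k1 : r1 ≤ (f x + ∑ i, lam1 i * (A.mulVec x i - b i))
        - 1 / (2 * L) * ‖f' x + ATv lam1‖ ^ 2 :=
      EReal.coe_le_coe_iff.1 (h1 ▸ hkey lam1 x)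
    have k2 : r2 ≤ (f x + ∑ i, lam2 i * (A.mulVec x i - b i))
        - 1 / (2 * L) * ‖f' x + ATv lam2‖ ^ 2 :=
      EReal.coe_le_coe_iff.1 (h2 ▸ hkey lam2 x)
    have hmix := mix_norm (f' x + ATv lam1) (f' x + ATv lam2) t ht0 ht1
    have hab : (f' x + ATv lam1) - (f' x + ATv lam2) = -(ATv (lam2 - lam1)) := by
      apply (WithLp.equiv 2 _).injective
      ext j
      simp only [hATv, WithLp.equiv_symm_apply, WithLp.equiv_apply, PiLp.sub_apply,
        PiLp.add_apply, PiLp.neg_apply, Pi.sub_apply, Pi.add_apply, Pi.neg_apply]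
      simp [Matrix.vecMul, dotProduct, PiLp.sub_apply, sub_mul,
        Finset.sum_sub_distrib]
    rw [hab, norm_neg] at hmix
    -- eigenvalue bound
    have heig : lmin * ‖lam2 - lam1‖ ^ 2 ≤ ‖ATv (lam2 - lam1)‖ ^ 2 := by
      have h0 := lambdaMin_mul_le (A * Aᵀ)
        (Matrix.isHermitian_mul_conjTranspose_self A) (lam2 - lam1)
      have hnv : ∑ i, (lam2 - lam1) i * (A * Aᵀ).mulVec (lam2 - lam1) i
          = ‖ATv (lam2 - lam1)‖ ^ 2 := by
        have hmm : (A * Aᵀ).mulVec (lam2 - lam1)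
            = A.mulVec (Matrix.vecMul (lam2 - lam1) A) := by
          rw [← Matrix.mulVec_mulVec, Matrix.mulVec_transpose]
          rfl
        rw [hmm, ← vecMul_dot A (lam2 - lam1).ofLp (Matrix.vecMul (lam2 - lam1) A)]
        rw [← real_inner_self_eq_norm_sq, PiLp.inner_apply]
        simp [RCLike.inner_apply, hATv, WithLp.equiv_symm_apply]
        exact Finset.sum_congr rfl fun _ _ => (sq _).symm
      rw [← hnv]
      exact h0
    -- affine combination of the linear part
    have haff : ∑ i, ((1 - t) • lam1 + t • lam2) i * (A.mulVec x i - b i)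
        = (1 - t) * ∑ i, lam1 i * (A.mulVec x i - b i)
          + t * ∑ i, lam2 i * (A.mulVec x i - b i) := by
      rw [Finset.mul_sum, Finset.mul_sum, ← Finset.sum_add_distrib]
      refine Finset.sum_congr rfl fun i _ => ?_
      have : ((1 - t) • lam1 + t • lam2) i = (1 - t) * lam1 i + t * lam2 i := by
        simp [PiLp.add_apply, PiLp.smul_apply, smul_eq_mul]
      rw [this]; ring
    rw [haff]
    exact combine r1 r2 t (f x) _ _ _ _ _ _ lmin L σ hL hσ ht0 ht1 k1 k2 hmix heig
  -- finiteness at l1, l2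
  have hb1 : θ l1 ≠ ⊥ := intrinsicInterior_subset hl1
  have hb2 : θ l2 ≠ ⊥ := intrinsicInterior_subset hl2
  set r1 : ℝ := (θ l1).toReal with hr1
  set r2 : ℝ := (θ l2).toReal with hr2
  have h1 : θ l1 = (r1 : EReal) := (EReal.coe_toReal (htop l1) hb1).symm
  have h2 : θ l2 = (r2 : EReal) := (EReal.coe_toReal (htop l2) hb2).symm
  have E1 := strengthen θ σ htop hconc l1 l2 r1 r2 h1 h2 s1 hs1
  have E2 := strengthen θ σ htop hconc l2 l1 r2 r1 h2 h1 s2 hs2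
  have hnn : ‖l1 - l2‖ = ‖l2 - l1‖ := norm_sub_rev _ _
  rw [hnn] at E2
  have hsplit : ∑ i, (s2 i - s1 i) * (l2 i - l1 i)
      = (∑ i, s2 i * (l2 i - l1 i)) - ∑ i, s1 i * (l2 i - l1 i) := by
    rw [← Finset.sum_sub_distrib]
    exact Finset.sum_congr rfl fun i _ => by ring
  have hp2 : ∑ i, s2 i * (l1 i - l2 i) = - ∑ i, s2 i * (l2 i - l1 i) := by
    rw [← Finset.sum_neg_distrib]
    exact Finset.sum_congr rfl fun i _ => by ring
  rw [hp2] at E2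
  rw [hsplit]
  linarith
end

section
/- Let f : ℝⁿ → ℝ be convex and differentiable with ∇f Lipschitz continuous on ℝⁿ with constant L(f) > 0 for the Euclidean norm, coercive (f(x) → +∞ as ‖x‖ → +∞), let A be a q × n real matrix whose rows are linearly independent, and let b ∈ ℝ^q. Then the value function v(c) = inf{ f(x) : Ax − b + c ≤ 0 }, c ∈ ℝ^q, is finite and convex on ℝ^q, differentiable at every c ∈ ℝ^q, and its gradient ∇v is Lipschitz continuous on ℝ^q with Lipschitz constant L(f)/λ_min(AAᵀ) for the Euclidean norm. -/
section Aux0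

open Set InnerProductSpace

variable {m : ℕ}

local notation "E" m => EuclideanSpace ℝ (Fin m)

/-- Minimum existence for coercive continuous functions on closed nonempty sets. -/
lemma aux_exists_min {f : EuclideanSpace ℝ (Fin m) → ℝ} (hf : Continuous f)
    (hcoer : ∀ M : ℝ, ∃ R : ℝ, ∀ x : EuclideanSpace ℝ (Fin m), R ≤ ‖x‖ → M ≤ f x)
    {S : Set (EuclideanSpace ℝ (Fin m))} (hS : IsClosed S) (hne : S.Nonempty) :
    ∃ x ∈ S, ∀ y ∈ S, f x ≤ f y := by
  obtain ⟨x₀, hx₀⟩ := hne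
  obtain ⟨R, hR⟩ := hcoer (f x₀ + 1)
  set r := max R ‖x₀‖ with hr
  set K := S ∩ Metric.closedBall 0 r with hK
  have hx₀K : x₀ ∈ K := ⟨hx₀, by simp [hr, Metric.mem_closedBall, dist_zero_right, le_max_right]⟩
  have hKc : IsCompact K := (isCompact_closedBall (0:EuclideanSpace ℝ (Fin m)) r).inter_left hS
  obtain ⟨x, hxK, hxmin⟩ := hKc.exists_isMinOn ⟨x₀, hx₀K⟩ hf.continuousOn
  refine ⟨x, hxK.1, fun y hy => ?_⟩
  by_cases hyb : ‖y‖ ≤ r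
  · exact hxmin ⟨hy, by simpa [Metric.mem_closedBall, dist_zero_right] using hyb⟩
  · have h1 : f x ≤ f x₀ := hxmin hx₀K
    have h2 : f x₀ + 1 ≤ f y := hR y (le_trans (le_max_left _ _) (le_of_not_ge hyb))
    linarith

end Aux0

section Aux1

open Set InnerProductSpace

variable {H : Type*} [NormedAddCommGroup H] [InnerProductSpace ℝ H] [CompleteSpace H]

local notation "⟪" x ", " y "⟫" => @inner ℝ _ _ x y

lemma aux_line_hasDerivAt {f : H → ℝ} {f' : H → H} (hdiff : ∀ x, HasGradientAt f (f' x) x)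
    (x d : H) (t : ℝ) :
    HasDerivAt (fun s : ℝ => f (x + s • d)) ⟪f' (x + t • d), d⟫ t := by
  have hline : HasDerivAt (fun s : ℝ => x + s • d) d t := by
    simpa using ((hasDerivAt_id t).smul_const d).const_add x
  have hF : HasFDerivAt f (toDual ℝ H (f' (x + t • d))) (x + t • d) :=
    (hdiff (x + t • d)).hasFDerivAt
  have := hF.comp_hasDerivAt t hline
  simp at this
  exact this

/-- First-order condition for convex differentiable functions. -/
lemma aux_grad_ineq {f : H → ℝ} {f' : H → H} (hconv : ConvexOn ℝ univ f)
    (hdiff : ∀ x, HasGradientAt f (f' x) x) (x y : H) :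
    f x + ⟪f' x, y - x⟫ ≤ f y := by
  set d := y - x with hd
  have hg : ∀ t : ℝ, HasDerivAt (fun s : ℝ => f (x + s • d)) ⟪f' (x + t • d), d⟫ t :=
    aux_line_hasDerivAt hdiff x d
  have hgc : ConvexOn ℝ univ (fun s : ℝ => f (x + s • d)) := by
    have := hconv.comp_affineMap (AffineMap.lineMap x y)
    have heq : ∀ s : ℝ, AffineMap.lineMap x y s = x + s • d := by
      intro s; simp [AffineMap.lineMap_apply, hd]; abel
    refine ⟨convex_univ, fun a _ b _ p q hp hq hpq => ?_⟩
    have h2 := this.2 (x := a) (y := b) (mem_preimage.mpr (mem_univ _)) (mem_preimage.mpr (mem_univ _)) hp hq hpq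
    simpa [Function.comp, heq] using h2
  have h01 : (0:ℝ) < 1 := one_pos
  have hslope := hgc.le_slope_of_hasDerivAt (mem_univ (0:ℝ)) (mem_univ (1:ℝ)) h01 (by simpa using hg 0)
  rw [slope_def_field] at hslope
  simp only [zero_smul, add_zero, one_smul] at hslope
  have : f (x + d) = f y := by rw [hd]; congr 1; abel
  rw [this] at hslope
  have : ⟪f' x, d⟫ ≤ f y - f x := by
    calc ⟪f' x, d⟫ ≤ (f y - f x) / (1 - 0) := hslope
    _ = f y - f x := by norm_num
  linarith

end Aux1

section Aux2

open Set InnerProductSpace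

variable {H : Type*} [NormedAddCommGroup H] [InnerProductSpace ℝ H] [CompleteSpace H]

local notation "⟪" x ", " y "⟫" => @inner ℝ _ _ x y

lemma aux_line_hasDerivAt' {f : H → ℝ} {f' : H → H} (hdiff : ∀ x, HasGradientAt f (f' x) x)
    (x d : H) (t : ℝ) :
    HasDerivAt (fun s : ℝ => f (x + s • d)) ⟪f' (x + t • d), d⟫ t := by
  have hline : HasDerivAt (fun s : ℝ => x + s • d) d t := by
    simpa using ((hasDerivAt_id t).smul_const d).const_add x
  have hF : HasFDerivAt f (toDual ℝ H (f' (x + t • d))) (x + t • d) :=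
    (hdiff (x + t • d)).hasFDerivAt
  have := hF.comp_hasDerivAt t hline
  simp at this
  exact this

/-- Descent lemma for functions with Lipschitz gradient. -/
lemma aux_descent {f : H → ℝ} {f' : H → H} (hdiff : ∀ x, HasGradientAt f (f' x) x)
    {L : ℝ} (hL : 0 < L) (hLip : ∀ x y, ‖f' y - f' x‖ ≤ L * ‖y - x‖) (x y : H) :
    f y ≤ f x + ⟪f' x, y - x⟫ + L / 2 * ‖y - x‖ ^ 2 := by
  set d := y - x with hd
  set g : ℝ → ℝ := fun s => f (x + s • d) with hgdef
  have hg : ∀ t : ℝ, HasDerivAt g ⟪f' (x + t • d), d⟫ t := aux_line_hasDerivAt' hdiff x d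
  set h : ℝ → ℝ := fun t => f x + t * ⟪f' x, d⟫ + L / 2 * t ^ 2 * ‖d‖ ^ 2 - g t with hhdef
  have hh : ∀ t : ℝ, HasDerivAt h (⟪f' x, d⟫ + L * t * ‖d‖ ^ 2 - ⟪f' (x + t • d), d⟫) t := by
    intro t
    have h1 : HasDerivAt (fun t : ℝ => f x + t * ⟪f' x, d⟫ + L / 2 * t ^ 2 * ‖d‖ ^ 2)
        (⟪f' x, d⟫ + L * t * ‖d‖ ^ 2) t := by
      have : HasDerivAt (fun t : ℝ => t * ⟪f' x, d⟫) ⟪f' x, d⟫ t := by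
        simpa using (hasDerivAt_id t).mul_const ⟪f' x, d⟫
      have h2 : HasDerivAt (fun t : ℝ => L / 2 * t ^ 2 * ‖d‖ ^ 2) (L * t * ‖d‖ ^ 2) t := by
        have := ((hasDerivAt_pow 2 t).const_mul (L / 2)).mul_const (‖d‖ ^ 2)
        exact this.congr_deriv (by ring)
      exact (this.const_add (f x)).add h2
    exact h1.sub (hg t)
  have hmono : MonotoneOn h (Icc (0:ℝ) 1) := by
    apply monotoneOn_of_deriv_nonneg (convex_Icc 0 1)
    · exact Continuous.continuousOn
        (continuous_iff_continuousAt.mpr fun t => (hh t).differentiableAt.continuousAt)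
    · intro t _
      exact (hh t).differentiableAt.differentiableWithinAt
    · intro t ht
      rw [(hh t).deriv]
      have ht' : 0 ≤ t := (interior_subset (s := Icc (0:ℝ) 1) ht).1
      have hcs : ⟪f' (x + t • d) - f' x, d⟫ ≤ ‖f' (x + t • d) - f' x‖ * ‖d‖ :=
        real_inner_le_norm _ _
      have hlip : ‖f' (x + t • d) - f' x‖ ≤ L * (t * ‖d‖) := by
        have := hLip x (x + t • d)
        simpa [norm_smul, abs_of_nonneg ht', mul_assoc] using this
      have h3 : ⟪f' (x + t • d), d⟫ - ⟪f' x, d⟫ ≤ L * t * ‖d‖ ^ 2 := by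
        rw [← inner_sub_left]
        calc ⟪f' (x + t • d) - f' x, d⟫ ≤ ‖f' (x + t • d) - f' x‖ * ‖d‖ := hcs
        _ ≤ L * (t * ‖d‖) * ‖d‖ := by
            apply mul_le_mul_of_nonneg_right hlip (norm_nonneg _)
        _ = L * t * ‖d‖ ^ 2 := by ring
      linarith
  have h01 := hmono (Set.left_mem_Icc.mpr zero_le_one) (Set.right_mem_Icc.mpr zero_le_one) zero_le_one
  have hg0 : g 0 = f x := by simp [hgdef]
  have hg1 : g 1 = f y := by simp only [hgdef, one_smul, hd]; congr 1; abel
  simp only [hhdef, hg0, hg1] at h01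
  simp only [zero_mul, mul_zero, zero_pow, add_zero, sub_self, one_mul, one_pow, mul_one] at h01
  linarith

end Aux2

section Aux3

open Set InnerProductSpace

variable {H : Type*} [NormedAddCommGroup H] [InnerProductSpace ℝ H] [CompleteSpace H]

local notation "⟪" x ", " y "⟫" => @inner ℝ _ _ x y


lemma aux_onesided {f : H → ℝ} {f' : H → H} (hconv : ConvexOn ℝ univ f)
    (hdiff : ∀ x, HasGradientAt f (f' x) x)
    {L : ℝ} (hL : 0 < L) (hLip : ∀ x y, ‖f' y - f' x‖ ≤ L * ‖y - x‖) (x y : H) :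
    f x + ⟪f' x, y - x⟫ + 1 / (2 * L) * ‖f' y - f' x‖ ^ 2 ≤ f y := by
  set a := f' x with ha
  set φ : H → ℝ := fun z => f z - ⟪a, z⟫ with hφ
  set φ' : H → H := fun z => f' z - a with hφ'
  have hφdiff : ∀ z, HasGradientAt φ (φ' z) z := by
    intro z
    rw [hasGradientAt_iff_hasFDerivAt]
    have h1 : HasFDerivAt φ (toDual ℝ H (f' z) - toDual ℝ H a) z := by
      exact ((hdiff z).hasFDerivAt).sub ((toDual ℝ H a).hasFDerivAt)
    simpa [hφ', map_sub] using h1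
  have hφconv : ConvexOn ℝ univ φ := by
    refine ⟨convex_univ, fun u _ w _ p q hp hq hpq => ?_⟩
    have h1 := hconv.2 (mem_univ u) (mem_univ w) hp hq hpq
    simp only [smul_eq_mul] at h1
    simp only [hφ, smul_eq_mul]
    rw [inner_add_right, real_inner_smul_right, real_inner_smul_right]
    linarith
  have hφLip : ∀ z w, ‖φ' w - φ' z‖ ≤ L * ‖w - z‖ := by
    intro z w; simpa [hφ', sub_sub_sub_cancel_right] using hLip z w
  have hmin : ∀ z, φ x ≤ φ z := by
    intro z
    have := aux_grad_ineq hφconv hφdiff x z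
    simpa [hφ', ha, sub_self, inner_zero_left] using this
  have hdes := aux_descent hφdiff hL hφLip y (y - (1 / L) • φ' y)
  have h1 : ⟪φ' y, y - (1 / L) • φ' y - y⟫ = -(1 / L) * ‖φ' y‖ ^ 2 := by
    rw [sub_sub_cancel_left, inner_neg_right, real_inner_smul_right,
      real_inner_self_eq_norm_sq]
    ring
  have h2 : ‖y - (1 / L) • φ' y - y‖ ^ 2 = (1 / L) ^ 2 * ‖φ' y‖ ^ 2 := by
    rw [sub_sub_cancel_left, norm_neg, norm_smul]
    simp [mul_pow, abs_of_nonneg (le_of_lt (one_div_pos.mpr hL))]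
  rw [h1, h2] at hdes
  have hkey : φ x ≤ φ y - 1 / (2 * L) * ‖φ' y‖ ^ 2 := by
    have := hmin (y - (1 / L) • φ' y)
    have hLne : L ≠ 0 := ne_of_gt hL
    have : φ x ≤ φ y + (-(1 / L) * ‖φ' y‖ ^ 2) + L / 2 * ((1 / L) ^ 2 * ‖φ' y‖ ^ 2) :=
      le_trans this hdes
    have heq : φ y + (-(1 / L) * ‖φ' y‖ ^ 2) + L / 2 * ((1 / L) ^ 2 * ‖φ' y‖ ^ 2)
        = φ y - 1 / (2 * L) * ‖φ' y‖ ^ 2 := by field_simp; ring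
    linarith [heq ▸ this]
  have hexp : ⟪a, y - x⟫ = ⟪a, y⟫ - ⟪a, x⟫ := inner_sub_right _ _ _
  simp only [hφ, hφ'] at hkey
  have : ⟪f' x, y - x⟫ = ⟪a, y⟫ - ⟪a, x⟫ := by rw [← ha, hexp]
  rw [this]
  linarith [hkey]

lemma aux_cocoercive {f : H → ℝ} {f' : H → H} (hconv : ConvexOn ℝ univ f)
    (hdiff : ∀ x, HasGradientAt f (f' x) x)
    {L : ℝ} (hL : 0 < L) (hLip : ∀ x y, ‖f' y - f' x‖ ≤ L * ‖y - x‖) (x y : H) :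
    ‖f' y - f' x‖ ^ 2 ≤ L * ⟪f' y - f' x, y - x⟫ := by
  have h1 := aux_onesided hconv hdiff hL hLip x y
  have h2 := aux_onesided hconv hdiff hL hLip y x
  rw [norm_sub_rev] at h2
  have h3 : ⟪f' y, x - y⟫ = -⟪f' y, y - x⟫ := by
    rw [← inner_neg_right]; congr 1; abel
  rw [h3] at h2
  have h4 : ⟪f' y - f' x, y - x⟫ = ⟪f' y, y - x⟫ - ⟪f' x, y - x⟫ := inner_sub_left _ _ _
  have h5 : 1 / (2 * L) * ‖f' y - f' x‖ ^ 2 + 1 / (2 * L) * ‖f' y - f' x‖ ^ 2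
      = (1 / L) * ‖f' y - f' x‖ ^ 2 := by field_simp; ring
  have h6 : (1 / L) * ‖f' y - f' x‖ ^ 2 ≤ ⟪f' y - f' x, y - x⟫ := by
    rw [h4]; linarith
  have := mul_le_mul_of_nonneg_left h6 (le_of_lt hL)
  calc ‖f' y - f' x‖ ^ 2 = L * ((1 / L) * ‖f' y - f' x‖ ^ 2) := by field_simp
  _ ≤ L * ⟪f' y - f' x, y - x⟫ := this

end Aux3

section Aux4

open Set Matrix

/-- Rayleigh-type lower bound: `(⨅ i, eigenvalues i) * (x ⬝ᵥ x) ≤ x ⬝ᵥ M *ᵥ x`. -/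
lemma aux_rayleigh {q : ℕ} (M : Matrix (Fin q) (Fin q) ℝ) (hM : M.IsHermitian)
    (x : Fin q → ℝ) :
    (⨅ i, hM.eigenvalues i) * (x ⬝ᵥ x) ≤ x ⬝ᵥ M *ᵥ x := by
  rcases isEmpty_or_nonempty (Fin q) with hq | hq
  · simp [dotProduct, Finset.sum_of_isEmpty]
  set U : Matrix (Fin q) (Fin q) ℝ := (hM.eigenvectorUnitary : Matrix (Fin q) (Fin q) ℝ) with hU
  have hspec := hM.spectral_theorem
  have hcoe : (RCLike.ofReal ∘ hM.eigenvalues : Fin q → ℝ) = hM.eigenvalues := by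
    funext i; simp
  rw [hcoe] at hspec
  set y : Fin q → ℝ := star U *ᵥ x with hy
  have hUU : U * star U = 1 := (Unitary.mem_iff.mp hM.eigenvectorUnitary.2).2
  have hxU : x ᵥ* U = y := by
    rw [hy]
    have : star U = Uᵀ := by
      rw [Matrix.star_eq_conjTranspose]
      ext i j; simp [Matrix.conjTranspose_apply]
    rw [this, Matrix.mulVec_transpose]
  have hxMx : x ⬝ᵥ M *ᵥ x = ∑ i, hM.eigenvalues i * y i ^ 2 := by
    conv_lhs => rw [hspec, Unitary.conjStarAlgAut_apply]
    rw [← Matrix.mulVec_mulVec, ← Matrix.mulVec_mulVec, Matrix.dotProduct_mulVec, hxU]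
    rw [← hy, Matrix.dotProduct_mulVec (v := y)]
    have hdiag : y ᵥ* Matrix.diagonal hM.eigenvalues = fun i => hM.eigenvalues i * y i := by
      funext i
      simp [Matrix.vecMul_diagonal, mul_comm]
    rw [hdiag]
    simp [dotProduct, pow_two, mul_assoc]
  have hxx : x ⬝ᵥ x = ∑ i, y i ^ 2 := by
    have h1 : x ⬝ᵥ x = x ⬝ᵥ (U *ᵥ y) := by
      rw [hy, Matrix.mulVec_mulVec, hUU, Matrix.one_mulVec]
    rw [h1, Matrix.dotProduct_mulVec, hxU]
    simp [dotProduct, pow_two]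
  rw [hxMx, hxx, Finset.mul_sum]
  apply Finset.sum_le_sum
  intro i _
  have hle : (⨅ j, hM.eigenvalues j) ≤ hM.eigenvalues i :=
    ciInf_le (Set.Finite.bddBelow (Set.finite_range _)) i
  exact mul_le_mul_of_nonneg_right hle (sq_nonneg _)

/-- `A * Aᵀ` is positive definite when the rows of `A` are linearly independent. -/
lemma aux_posdef {n q : ℕ} (A : Matrix (Fin q) (Fin n) ℝ) (hA : LinearIndependent ℝ A) :
    (A * Aᵀ).PosDef := by
  rw [Matrix.posDef_iff_dotProduct_mulVec]
  constructor
  · exact Matrix.isHermitian_mul_conjTranspose_self A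
  · intro x hx
    have hvec : x ᵥ* A ≠ 0 := by
      intro h0
      apply hx
      have hli := Fintype.linearIndependent_iff.mp hA x ?_
      · funext i; exact hli i
      · funext j
        have : (x ᵥ* A) j = 0 := by rw [h0]; rfl
        simpa [Matrix.vecMul, dotProduct, Finset.sum_apply, Pi.smul_apply, smul_eq_mul] using this
    have hcalc : star x ⬝ᵥ (A * Aᵀ) *ᵥ x = (x ᵥ* A) ⬝ᵥ (x ᵥ* A) := by
      rw [star_trivial, ← Matrix.mulVec_mulVec, Matrix.dotProduct_mulVec, Matrix.mulVec_transpose]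
    rw [hcalc]
    obtain ⟨j, hj⟩ := Function.ne_iff.mp hvec
    have : 0 < ∑ j, (x ᵥ* A) j * (x ᵥ* A) j := by
      apply Finset.sum_pos' (fun j _ => mul_self_nonneg _)
      exact ⟨j, Finset.mem_univ j, mul_self_pos.mpr hj⟩
    simpa [dotProduct] using this

end Aux4

section Aux5

open Set InnerProductSpace

variable {F : Type*} [NormedAddCommGroup F] [InnerProductSpace ℝ F] [FiniteDimensional ℝ F]

local notation "⟪" x ", " y "⟫" => @inner ℝ _ _ x y

/-- A convex function on a finite-dimensional space has a subgradient at every point. -/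
lemma aux_subgradient {w : F → ℝ} (hconv : ConvexOn ℝ univ w) (c₀ : F) :
    ∃ lam : F, ∀ c, w c₀ + ⟪lam, c - c₀⟫ ≤ w c := by
  have hwcont : Continuous w :=
    continuousOn_univ.mp (hconv.continuousOn isOpen_univ)
  set Epi : Set (F × ℝ) := {p | w p.1 < p.2} with hEpi
  have hopen : IsOpen Epi := isOpen_lt (hwcont.comp continuous_fst) continuous_snd
  have hconvE : Convex ℝ Epi := by
    intro p hp p' hp' a b' ha hb hab
    simp only [hEpi, mem_setOf_eq] at hp hp' ⊢
    have hcomb := hconv.2 (mem_univ p.1) (mem_univ p'.1) ha hb hab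
    simp only [smul_eq_mul] at hcomb
    have hfst : (a • p + b' • p').1 = a • p.1 + b' • p'.1 := rfl
    have hsnd : (a • p + b' • p').2 = a * p.2 + b' * p'.2 := rfl
    rw [hfst, hsnd]
    have hlt : a * w p.1 + b' * w p'.1 < a * p.2 + b' * p'.2 := by
      rcases eq_or_lt_of_le ha with h | h
      · have hb1 : b' = 1 := by linarith
        rw [← h, hb1]; simpa using hp'
      · exact add_lt_add_of_lt_of_le (mul_lt_mul_of_pos_left hp h)
          (mul_le_mul_of_nonneg_left hp'.le hb)
    exact lt_of_le_of_lt hcomb hlt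
  have hnotin : (c₀, w c₀) ∉ Epi := by simp [hEpi]
  obtain ⟨ℓ, hℓ⟩ := geometric_hahn_banach_open_point hconvE hopen hnotin
  set α : ℝ := ℓ (0, 1) with hα
  set g : F → ℝ := fun c => ℓ (c, 0) with hg
  have hdecomp : ∀ (c : F) (t : ℝ), ℓ (c, t) = g c + t * α := by
    intro c t
    have : (c, t) = (c, (0:ℝ)) + t • ((0:F), (1:ℝ)) := by
      ext <;> simp
    rw [this, map_add, map_smul]
    simp [hg, hα, smul_eq_mul]
  have hαneg : α < 0 := by
    have h1 := hℓ (c₀, w c₀ + 1) (by simp [hEpi])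
    rw [hdecomp, hdecomp] at h1
    linarith
  have hkey : ∀ c, g c + w c * α ≤ g c₀ + w c₀ * α := by
    intro c
    by_contra hcon
    push_neg at hcon
    set ε : ℝ := (g c + w c * α - (g c₀ + w c₀ * α)) / (-α) with hε
    have hεpos : 0 < ε := div_pos (by linarith) (by linarith)
    have h1 := hℓ (c, w c + ε) (by simp [hEpi]; linarith)
    rw [hdecomp, hdecomp] at h1
    have hεα : ε * (-α) = g c + w c * α - (g c₀ + w c₀ * α) :=
      div_mul_cancel₀ _ (by linarith : (-α) ≠ 0)
    nlinarith [h1, hεα]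
  refine ⟨(toDual ℝ F).symm ((-α⁻¹) • (ℓ.comp (ContinuousLinearMap.inl ℝ F ℝ))), fun c => ?_⟩
  have hinner : ∀ d : F, ⟪(toDual ℝ F).symm ((-α⁻¹) • (ℓ.comp (ContinuousLinearMap.inl ℝ F ℝ))), d⟫
      = -α⁻¹ * g d := by
    intro d
    rw [toDual_symm_apply]
    simp [hg]
  rw [hinner]
  have hgsub : g (c - c₀) = g c - g c₀ := by
    simp only [hg]
    have : ((c - c₀, (0:ℝ)) : F × ℝ) = (c, 0) - (c₀, 0) := by ext <;> simp
    rw [this, map_sub]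
  rw [hgsub]
  have hk := hkey c
  have hα0 : α ≠ 0 := ne_of_lt hαneg
  have hinvpos : 0 < -α⁻¹ := by
    rw [neg_pos]
    exact inv_lt_zero.mpr hαneg
  have hbr : 0 ≤ (w c₀ - w c) * α - (g c - g c₀) := by nlinarith [hk]
  have this1 := mul_nonneg hinvpos.le hbr
  have hexp : (-α⁻¹) * ((w c₀ - w c) * α - (g c - g c₀))
      = -(w c₀ - w c) - (-α⁻¹) * (g c - g c₀) := by
    field_simp
    ring
  rw [hexp] at this1
  linarith

end Aux5

section Aux6

open Set Matrix InnerProductSpace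

local notation "⟪" x ", " y "⟫" => @inner ℝ _ _ x y

/-- Reinterpret a plain vector as an element of Euclidean space. -/
noncomputable def euc {m : ℕ} (x : Fin m → ℝ) : EuclideanSpace ℝ (Fin m) :=
  (WithLp.equiv 2 (Fin m → ℝ)).symm x

@[simp] lemma euc_apply {m : ℕ} (x : Fin m → ℝ) (i : Fin m) : euc x i = x i := rfl

lemma aux_inner_eq {m : ℕ} (u w : EuclideanSpace ℝ (Fin m)) : ⟪u, w⟫ = ∑ i, u i * w i := by
  simp [PiLp.inner_apply, RCLike.inner_apply, starRingEnd_apply, star_trivial]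
  exact Finset.sum_congr rfl (fun i _ => mul_comm _ _)

lemma aux_adj {n q : ℕ} (A : Matrix (Fin q) (Fin n) ℝ) (μ : EuclideanSpace ℝ (Fin q))
    (z : EuclideanSpace ℝ (Fin n)) :
    ⟪μ, euc (A *ᵥ z)⟫ = ⟪euc (μ ᵥ* A), z⟫ := by
  rw [aux_inner_eq, aux_inner_eq]
  have h1 : ∀ i, μ i * (A *ᵥ z) i = ∑ j, μ i * A i j * z j := by
    intro i
    simp [Matrix.mulVec, dotProduct, Finset.mul_sum, mul_assoc]
  have h2 : ∀ j, (μ ᵥ* A) j * z j = ∑ i, μ i * A i j * z j := by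
    intro j
    simp [Matrix.vecMul, dotProduct, Finset.sum_mul]
  calc ∑ i, μ i * euc (A *ᵥ z) i = ∑ i, ∑ j, μ i * A i j * z j := by
        exact Finset.sum_congr rfl fun i _ => h1 i
  _ = ∑ j, ∑ i, μ i * A i j * z j := Finset.sum_comm
  _ = ∑ j, euc (μ ᵥ* A) j * z j := Finset.sum_congr rfl fun j _ => (h2 j).symm

lemma aux_norm_sq_eq {m : ℕ} (u : EuclideanSpace ℝ (Fin m)) : ‖u‖ ^ 2 = u ⬝ᵥ u := by
  rw [← real_inner_self_eq_norm_sq, aux_inner_eq]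
  rfl

lemma aux_norm_vecMul {n q : ℕ} (A : Matrix (Fin q) (Fin n) ℝ) (μ : EuclideanSpace ℝ (Fin q)) :
    ‖euc (μ ᵥ* A)‖ ^ 2 = μ ⬝ᵥ ((A * Aᵀ) *ᵥ μ) := by
  rw [aux_norm_sq_eq]
  show (μ ᵥ* A) ⬝ᵥ (μ ᵥ* A) = μ ⬝ᵥ ((A * Aᵀ) *ᵥ μ)
  rw [← Matrix.mulVec_mulVec, Matrix.dotProduct_mulVec, Matrix.mulVec_transpose]

end Aux6

section Main
open Set Matrix InnerProductSpace

open scoped Matrix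

local notation "⟪" x ", " y "⟫" => @inner ℝ _ _ x y

/-- Under (H1)-(H2) with `f` coercive, the value function
`v(c) = inf{f(x) : Ax − b + c ≤ 0}` is finite and convex on `ℝ^q`, differentiable
everywhere, and `∇v` is Lipschitz with constant `L/λ_min(AAᵀ)`. -/
theorem value_function_differentiable_lipschitz_gradient
    {n q : ℕ} (f : EuclideanSpace ℝ (Fin n) → ℝ)
    (f' : EuclideanSpace ℝ (Fin n) → EuclideanSpace ℝ (Fin n))
    (hconv : ConvexOn ℝ Set.univ f)
    (hdiff : ∀ x, HasGradientAt f (f' x) x)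
    (L : ℝ) (hL : 0 < L)
    (hLip : ∀ x y, ‖f' y - f' x‖ ≤ L * ‖y - x‖)
    (hcoercive : ∀ M : ℝ, ∃ R : ℝ, ∀ x : EuclideanSpace ℝ (Fin n), R ≤ ‖x‖ → M ≤ f x)
    (A : Matrix (Fin q) (Fin n) ℝ)
    (hA : LinearIndependent ℝ A)
    (b : EuclideanSpace ℝ (Fin q))
    (v : EuclideanSpace ℝ (Fin q) → EReal)
    (hv : v = fun c => ⨅ x ∈ {x : EuclideanSpace ℝ (Fin n) |
        ∀ i, A.mulVec x i - b i + c i ≤ 0}, ((f x : ℝ) : EReal)) :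
    (∀ c, v c ≠ ⊥ ∧ v c ≠ ⊤) ∧
    ConvexOn ℝ Set.univ (fun c => (v c).toReal) ∧
    ∃ v' : EuclideanSpace ℝ (Fin q) → EuclideanSpace ℝ (Fin q),
      (∀ c, HasGradientAt (fun c => (v c).toReal) (v' c) c) ∧
      ∀ c1 c2, ‖v' c2 - v' c1‖
        ≤ (L / lambdaMin (A * Aᵀ) (Matrix.isHermitian_mul_conjTranspose_self A))
          * ‖c2 - c1‖ := by
  classical
  have hfc : Continuous f :=
    continuous_iff_continuousAt.mpr fun x => ((hdiff x).differentiableAt).continuousAt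
  have hposdef : (A * Aᵀ).PosDef := aux_posdef A hA
  have hdet : IsUnit (A * Aᵀ).det := (Matrix.isUnit_iff_isUnit_det _).mp hposdef.isUnit
  -- closedness of the feasible sets
  have hcoord : ∀ j, Continuous fun x : EuclideanSpace ℝ (Fin n) => x j := fun j =>
    (continuous_apply j).comp (PiLp.continuous_ofLp 2 fun _ : Fin n => ℝ)
  have hSclosed : ∀ c : EuclideanSpace ℝ (Fin q),
      IsClosed {x : EuclideanSpace ℝ (Fin n) | ∀ i, A.mulVec x i - b i + c i ≤ 0} := by
    intro c
    have hrw : {x : EuclideanSpace ℝ (Fin n) | ∀ i, A.mulVec x i - b i + c i ≤ 0}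
        = ⋂ i, {x : EuclideanSpace ℝ (Fin n) | A.mulVec x i - b i + c i ≤ 0} := by
      ext x; simp [Set.mem_iInter]
    rw [hrw]
    refine isClosed_iInter fun i => isClosed_le ?_ continuous_const
    have hmv : Continuous fun x : EuclideanSpace ℝ (Fin n) => A.mulVec x i := by
      have hexp : ∀ x : EuclideanSpace ℝ (Fin n), A.mulVec x i = ∑ j, A i j * x j :=
        fun x => rfl
      simpa [hexp] using
        (continuous_finset_sum Finset.univ fun j _ => continuous_const.mul (hcoord j))
    exact (hmv.sub continuous_const).add continuous_const
  -- nonemptiness of the feasible sets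
  have hSne : ∀ c : EuclideanSpace ℝ (Fin q),
      {x : EuclideanSpace ℝ (Fin n) | ∀ i, A.mulVec x i - b i + c i ≤ 0}.Nonempty := by
    intro c
    refine ⟨euc (Aᵀ *ᵥ ((A * Aᵀ)⁻¹ *ᵥ fun i => b i - c i)), fun i => ?_⟩
    have h1 : A.mulVec (euc (Aᵀ *ᵥ ((A * Aᵀ)⁻¹ *ᵥ fun i => b i - c i)))
        = fun i => b i - c i := by
      show A *ᵥ (Aᵀ *ᵥ ((A * Aᵀ)⁻¹ *ᵥ fun i => b i - c i)) = _
      rw [Matrix.mulVec_mulVec, Matrix.mulVec_mulVec, Matrix.mul_nonsing_inv _ hdet]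
      simp [Matrix.one_mulVec]
    rw [h1]
    simp
  have hmin : ∀ c : EuclideanSpace ℝ (Fin q),
      ∃ x ∈ {x : EuclideanSpace ℝ (Fin n) | ∀ i, A.mulVec x i - b i + c i ≤ 0},
      ∀ y ∈ {x : EuclideanSpace ℝ (Fin n) | ∀ i, A.mulVec x i - b i + c i ≤ 0}, f x ≤ f y :=
    fun c => aux_exists_min hfc hcoercive (hSclosed c) (hSne c)
  choose xs hxsS hxsmin using hmin
  have hfeas : ∀ c i, A.mulVec (xs c) i - b i + c i ≤ 0 := fun c => hxsS c
  have hveq : ∀ c, v c = ((f (xs c) : ℝ) : EReal) := by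
    intro c; rw [hv]
    exact le_antisymm (iInf₂_le (xs c) (hxsS c))
      (le_iInf₂ fun x hx => EReal.coe_le_coe_iff.mpr (hxsmin c x hx))
  have hw : (fun c => (v c).toReal) = fun c => f (xs c) :=
    funext fun c => by rw [hveq c]; exact EReal.toReal_coe _
  have hwconv : ConvexOn ℝ Set.univ fun c : EuclideanSpace ℝ (Fin q) => f (xs c) := by
    refine ⟨convex_univ, fun c1 _ c2 _ p r hp hr hpr => ?_⟩
    have hxc : (p • xs c1 + r • xs c2) ∈ {x : EuclideanSpace ℝ (Fin n) |
        ∀ i, A.mulVec x i - b i + (p • c1 + r • c2) i ≤ 0} := by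
      intro i
      have hmv : A.mulVec (p • xs c1 + r • xs c2 : EuclideanSpace ℝ (Fin n)) i
          = p * A.mulVec (xs c1) i + r * A.mulVec (xs c2) i := by
        show (A *ᵥ (p • (xs c1) + r • (xs c2))) i = _
        rw [Matrix.mulVec_add, Matrix.mulVec_smul, Matrix.mulVec_smul]
        rfl
      have happ : (p • c1 + r • c2) i = p * c1 i + r * c2 i := by
        rw [PiLp.add_apply, PiLp.smul_apply, PiLp.smul_apply]
        simp
      have h1 := hfeas c1 i
      have h2 := hfeas c2 i
      have e1 := mul_le_mul_of_nonneg_left h1 hp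
      have e2 := mul_le_mul_of_nonneg_left h2 hr
      have hb : p * b i + r * b i = b i := by rw [← add_mul, hpr, one_mul]
      rw [hmv, happ]
      nlinarith [e1, e2]
    have hle := hxsmin (p • c1 + r • c2) _ hxc
    have hcc := hconv.2 (Set.mem_univ (xs c1)) (Set.mem_univ (xs c2)) hp hr hpr
    simp only [smul_eq_mul] at hcc ⊢
    exact le_trans hle hcc
  have hsub := fun c₀ => aux_subgradient hwconv c₀
  choose lam hlam using hsub
  have hlamnn : ∀ c i, 0 ≤ lam c i := by
    intro c i
    have hsetsub : xs c ∈ {x : EuclideanSpace ℝ (Fin n) |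
        ∀ j, A.mulVec x j - b j + (c - EuclideanSpace.single i (1:ℝ)) j ≤ 0} := by
      intro j
      have h1 := hfeas c j
      have h2 : (c - EuclideanSpace.single i (1:ℝ)) j ≤ c j := by
        rw [PiLp.sub_apply, EuclideanSpace.single_apply]
        split <;> linarith
      linarith
    have hmono : f (xs (c - EuclideanSpace.single i (1:ℝ))) ≤ f (xs c) :=
      hxsmin _ (xs c) hsetsub
    have h3 := hlam c (c - EuclideanSpace.single i (1:ℝ))
    have h4 : ⟪lam c, (c - EuclideanSpace.single i (1:ℝ)) - c⟫ = - lam c i := by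
      have he : (c - EuclideanSpace.single i (1:ℝ)) - c = -(EuclideanSpace.single i (1:ℝ)) := by
        abel
      rw [he, inner_neg_right]
      have : ⟪lam c, (EuclideanSpace.single i (1:ℝ) : EuclideanSpace ℝ (Fin q))⟫ = lam c i := by
        rw [aux_inner_eq]
        simp [EuclideanSpace.single_apply]
      rw [this]
    rw [h4] at h3
    linarith
  have hfeas' : ∀ (x : EuclideanSpace ℝ (Fin n)) (c : EuclideanSpace ℝ (Fin q)),
      f (xs c) + ⟪lam c, euc (fun i => b i - A.mulVec x i) - c⟫ ≤ f x := by
    intro x c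
    have hx' : x ∈ {y : EuclideanSpace ℝ (Fin n) |
        ∀ i, A.mulVec y i - b i + (euc (fun i => b i - A.mulVec x i)) i ≤ 0} := by
      intro i
      simp only [euc_apply]
      linarith
    have h1 := hlam c (euc (fun i => b i - A.mulVec x i))
    have h2 := hxsmin (euc (fun i => b i - A.mulVec x i)) x hx'
    linarith
  have hcompl : ∀ c, ⟪lam c, euc (fun i => A.mulVec (xs c) i - b i + c i)⟫ = 0 := by
    intro c
    refine le_antisymm ?_ ?_
    · rw [aux_inner_eq]
      apply Finset.sum_nonpos
      intro i _
      simp only [euc_apply]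
      exact mul_nonpos_iff.mpr (Or.inl ⟨hlamnn c i, hfeas c i⟩)
    · have h := hfeas' (xs c) c
      have h5 : euc (fun i => b i - A.mulVec (xs c) i) - c
          = -(euc (fun i => A.mulVec (xs c) i - b i + c i)) := by
        ext i
        simp only [PiLp.sub_apply, PiLp.neg_apply, euc_apply]
        ring
      rw [h5, inner_neg_right] at h
      linarith
  have hKKT : ∀ c, f' (xs c) = - euc ((lam c) ᵥ* A) := by
    intro c
    have hglob : ∀ x, f (xs c) + ⟪euc ((lam c) ᵥ* A), xs c⟫
        ≤ f x + ⟪euc ((lam c) ᵥ* A), x⟫ := by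
      intro x
      have h1 := hfeas' x c
      have hd1 : euc (fun i => b i - A.mulVec x i) - c = (b - c) - euc (A *ᵥ x) := by
        ext i
        simp only [PiLp.sub_apply, euc_apply]
        ring
      rw [hd1, inner_sub_right, aux_adj] at h1
      have h2 := hcompl c
      have hd2 : euc (fun i => A.mulVec (xs c) i - b i + c i)
          = euc (A *ᵥ (xs c)) - (b - c) := by
        ext i
        simp only [PiLp.sub_apply, euc_apply]
        ring
      rw [hd2, inner_sub_right, aux_adj] at h2
      linarith
    have hloc : IsLocalMin (fun x => f x + ⟪euc ((lam c) ᵥ* A), x⟫) (xs c) :=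
      Filter.Eventually.of_forall hglob
    have hF : HasFDerivAt (fun x => f x + ⟪euc ((lam c) ᵥ* A), x⟫)
        (toDual ℝ (EuclideanSpace ℝ (Fin n)) (f' (xs c))
          + toDual ℝ (EuclideanSpace ℝ (Fin n)) (euc ((lam c) ᵥ* A))) (xs c) := by
      have h3 := ((hdiff (xs c)).hasFDerivAt).add
        ((toDual ℝ (EuclideanSpace ℝ (Fin n)) (euc ((lam c) ᵥ* A))).hasFDerivAt
          (x := xs c))
      exact h3
    have hzero := hloc.hasFDerivAt_eq_zero hF
    have hz2 : toDual ℝ (EuclideanSpace ℝ (Fin n)) (f' (xs c) + euc ((lam c) ᵥ* A)) = 0 := by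
      rw [map_add]; exact hzero
    have h0 : f' (xs c) + euc ((lam c) ᵥ* A) = 0 := by
      have := (toDual ℝ (EuclideanSpace ℝ (Fin n))).injective
        (hz2.trans (map_zero (toDual ℝ (EuclideanSpace ℝ (Fin n)))).symm)
      exact this
    exact eq_neg_of_add_eq_zero_left h0
  have hlmin_nonneg : 0 ≤ lambdaMin (A * Aᵀ) (Matrix.isHermitian_mul_conjTranspose_self A) := by
    unfold lambdaMin
    rcases isEmpty_or_nonempty (Fin q) with hq | hq
    · rw [Real.iInf_of_isEmpty]
    · exact le_ciInf fun i => (hposdef.eigenvalues_pos i).le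
  have hlmin_pos : Nonempty (Fin q) →
      0 < lambdaMin (A * Aᵀ) (Matrix.isHermitian_mul_conjTranspose_self A) := by
    intro hne
    obtain ⟨i0, hi0⟩ := Finite.exists_min
      fun i => (Matrix.isHermitian_mul_conjTranspose_self A).eigenvalues i
    have h1 : 0 < (Matrix.isHermitian_mul_conjTranspose_self A).eigenvalues i0 :=
      hposdef.eigenvalues_pos i0
    have h2 : (Matrix.isHermitian_mul_conjTranspose_self A).eigenvalues i0
        ≤ lambdaMin (A * Aᵀ) (Matrix.isHermitian_mul_conjTranspose_self A) := le_ciInf hi0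
    linarith
  have hmonokey : ∀ c1 c2, lambdaMin (A * Aᵀ) (Matrix.isHermitian_mul_conjTranspose_self A)
      * ‖lam c1 - lam c2‖ ^ 2 ≤ L * ⟪lam c1 - lam c2, c1 - c2⟫ := by
    intro c1 c2
    set μ : EuclideanSpace ℝ (Fin q) := lam c1 - lam c2 with hμ
    have hpair : ∀ ca cb, ⟪lam ca, euc (fun i => A.mulVec (xs cb) i - b i + cb i)⟫ ≤ 0 := by
      intro ca cb
      rw [aux_inner_eq]
      apply Finset.sum_nonpos
      intro i _
      simp only [euc_apply]
      exact mul_nonpos_iff.mpr (Or.inl ⟨hlamnn ca i, hfeas cb i⟩)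
    set X : EuclideanSpace ℝ (Fin q) → EuclideanSpace ℝ (Fin q) :=
      fun cc => euc (fun i => A.mulVec (xs cc) i - b i + cc i) with hX
    have e1 : ⟪lam c1, X c2 - X c1⟫ ≤ 0 := by
      rw [inner_sub_right]
      linarith [hpair c1 c2, hcompl c1]
    have e2 : ⟪lam c2, X c1 - X c2⟫ ≤ 0 := by
      rw [inner_sub_right]
      linarith [hpair c2 c1, hcompl c2]
    have e2' : ⟪lam c2, X c2 - X c1⟫ = -⟪lam c2, X c1 - X c2⟫ := by
      rw [← inner_neg_right]; congr 1; abel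
    have e3 : ⟪μ, X c2 - X c1⟫ ≤ 0 := by
      rw [hμ, inner_sub_left]
      linarith [e1, e2, e2']
    have hvm : euc (μ ᵥ* A) = f' (xs c2) - f' (xs c1) := by
      have h2 : euc (μ ᵥ* A) = euc (lam c1 ᵥ* A) - euc (lam c2 ᵥ* A) := by
        ext j
        simp only [euc_apply, PiLp.sub_apply, Matrix.vecMul, dotProduct, hμ, sub_mul,
          Finset.sum_sub_distrib]
      have h3 : euc (lam c1 ᵥ* A) = -f' (xs c1) := by rw [hKKT c1]; simp
      have h4 : euc (lam c2 ᵥ* A) = -f' (xs c2) := by rw [hKKT c2]; simp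
      rw [h2, h3, h4]; abel
    have hXdiff : X c2 - X c1 = (euc (A *ᵥ (xs c2)) - euc (A *ᵥ (xs c1))) + (c2 - c1) := by
      ext i
      simp only [hX, PiLp.sub_apply, PiLp.add_apply, euc_apply]
      ring
    have e4 : ⟪μ, X c2 - X c1⟫
        = ⟪f' (xs c2) - f' (xs c1), xs c2 - xs c1⟫ + ⟪μ, c2 - c1⟫ := by
      rw [hXdiff, inner_add_right, inner_sub_right, aux_adj, aux_adj, ← inner_sub_right, hvm]
    have hcoc := aux_cocoercive hconv hdiff hL hLip (xs c1) (xs c2)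
    have hray := aux_rayleigh (A * Aᵀ) (Matrix.isHermitian_mul_conjTranspose_self A) μ
    have hnorm1 : ‖μ‖ ^ 2 = μ ⬝ᵥ μ := aux_norm_sq_eq μ
    have hnorm2 : ‖euc (μ ᵥ* A)‖ ^ 2 = μ ⬝ᵥ ((A * Aᵀ) *ᵥ μ) := aux_norm_vecMul A μ
    have hlminray : lambdaMin (A * Aᵀ) (Matrix.isHermitian_mul_conjTranspose_self A) * ‖μ‖ ^ 2
        ≤ ‖euc (μ ᵥ* A)‖ ^ 2 := by
      rw [hnorm1, hnorm2]
      exact hray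
    have hneg : ⟪μ, c1 - c2⟫ = -⟪μ, c2 - c1⟫ := by
      rw [← inner_neg_right]; congr 1; abel
    have hT : ⟪f' (xs c2) - f' (xs c1), xs c2 - xs c1⟫ ≤ ⟪μ, c1 - c2⟫ := by
      rw [hneg]; linarith [e3, e4]
    have hfin : ‖euc (μ ᵥ* A)‖ ^ 2 ≤ L * ⟪μ, c1 - c2⟫ := by
      rw [hvm]
      calc ‖f' (xs c2) - f' (xs c1)‖ ^ 2
          ≤ L * ⟪f' (xs c2) - f' (xs c1), xs c2 - xs c1⟫ := hcoc
      _ ≤ L * ⟪μ, c1 - c2⟫ := mul_le_mul_of_nonneg_left hT hL.le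
    linarith [hlminray, hfin]
  have hlip : ∀ c1 c2 : EuclideanSpace ℝ (Fin q), ‖lam c2 - lam c1‖
      ≤ (L / lambdaMin (A * Aᵀ) (Matrix.isHermitian_mul_conjTranspose_self A)) * ‖c2 - c1‖ := by
    intro c1 c2
    by_cases h0 : lam c2 - lam c1 = 0
    · rw [h0, norm_zero]
      exact mul_nonneg (div_nonneg hL.le hlmin_nonneg) (norm_nonneg _)
    · have hne : Nonempty (Fin q) := by
        by_contra hq
        rw [not_nonempty_iff] at hq
        refine h0 ?_
        ext i
        exact (hq.false i).elim
      have hpos := hlmin_pos hne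
      have hkey := hmonokey c2 c1
      have hcs : ⟪lam c2 - lam c1, c2 - c1⟫ ≤ ‖lam c2 - lam c1‖ * ‖c2 - c1‖ :=
        real_inner_le_norm _ _
      have hnpos : 0 < ‖lam c2 - lam c1‖ := norm_pos_iff.mpr h0
      have h1 : lambdaMin (A * Aᵀ) (Matrix.isHermitian_mul_conjTranspose_self A)
          * ‖lam c2 - lam c1‖ ≤ L * ‖c2 - c1‖ := by
        nlinarith [hkey, mul_le_mul_of_nonneg_left hcs hL.le, hnpos]
      rw [div_mul_eq_mul_div, le_div_iff₀ hpos]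
      nlinarith [h1]
  have hgrad : ∀ c, HasGradientAt (fun c => f (xs c)) (lam c) c := by
    intro c
    rw [hasGradientAt_iff_isLittleO]
    set K := L / lambdaMin (A * Aᵀ) (Matrix.isHermitian_mul_conjTranspose_self A) with hKdef
    have hK0 : 0 ≤ K := div_nonneg hL.le hlmin_nonneg
    have hbound : ∀ c', ‖f (xs c') - f (xs c) - ⟪lam c, c' - c⟫‖
        ≤ K * ‖c' - c‖ * ‖c' - c‖ := by
      intro c'
      have h1 := hlam c c'
      have h2 := hlam c' c
      have hx : ⟪lam c', c - c'⟫ = -⟪lam c', c' - c⟫ := by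
        rw [← inner_neg_right]; congr 1; abel
      have h3 : f (xs c') - f (xs c) - ⟪lam c, c' - c⟫ ≤ ⟪lam c' - lam c, c' - c⟫ := by
        rw [inner_sub_left]
        linarith [h2, hx]
      have h4 : ⟪lam c' - lam c, c' - c⟫ ≤ K * ‖c' - c‖ * ‖c' - c‖ := by
        calc ⟪lam c' - lam c, c' - c⟫ ≤ ‖lam c' - lam c‖ * ‖c' - c‖ :=
              real_inner_le_norm _ _
        _ ≤ (K * ‖c' - c‖) * ‖c' - c‖ :=
              mul_le_mul_of_nonneg_right (hlip c c') (norm_nonneg _)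
        _ = K * ‖c' - c‖ * ‖c' - c‖ := by ring
      have h5 : 0 ≤ f (xs c') - f (xs c) - ⟪lam c, c' - c⟫ := by linarith [h1]
      rw [Real.norm_eq_abs, abs_of_nonneg h5]
      linarith [h3, h4]
    rw [Asymptotics.isLittleO_iff]
    intro ε hε
    have hδ : 0 < ε / (K + 1) := by positivity
    filter_upwards [Metric.ball_mem_nhds c hδ] with c' hc'
    have hd : ‖c' - c‖ < ε / (K + 1) := by rwa [Metric.mem_ball, dist_eq_norm] at hc'
    have hb := hbound c'
    have h6 : K * (ε / (K + 1)) ≤ ε := by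
      rw [mul_comm, div_mul_eq_mul_div, div_le_iff₀ (by positivity : (0:ℝ) < K + 1)]
      nlinarith [hε.le, hK0]
    have h7 : K * ‖c' - c‖ ≤ ε := by
      have := mul_le_mul_of_nonneg_left hd.le hK0
      linarith
    calc ‖f (xs c') - f (xs c) - ⟪lam c, c' - c⟫‖
        ≤ K * ‖c' - c‖ * ‖c' - c‖ := hb
    _ ≤ ε * ‖c' - c‖ := mul_le_mul_of_nonneg_right h7 (norm_nonneg _)
    _ = ε * ‖c' - c‖ := rfl
  refine ⟨fun c => ?_, ?_, lam, fun c => ?_, hlip⟩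
  · rw [hveq c]; exact ⟨EReal.coe_ne_bot _, EReal.coe_ne_top _⟩
  · rw [hw]; exact hwconv
  · rw [hw]; exact hgrad c

end Main
end

section
/- Let f : ℝⁿ → ℝ be convex and differentiable with ∇f Lipschitz continuous on ℝⁿ with constant L(f) > 0 for the Euclidean norm, coercive (f(x) → +∞ as ‖x‖ → +∞), let A be a q × n real matrix whose rows are linearly independent, and let b ∈ ℝ^q. Then the dual function θ(λ) = inf_{x ∈ ℝⁿ} [ f(x) + λᵀ(Ax − b) ] is strongly concave on the nonnegative orthant ℝ₊^q with constant of strong concavity λ_min(AAᵀ)/L(f) with respect to the Euclidean norm. -/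
open scoped Matrix
open RealInnerProductSpace

set_option maxHeartbeats 1000000

lemma rayleigh_min {q : ℕ} (M : Matrix (Fin q) (Fin q) ℝ) (hM : M.IsHermitian) (v : Fin q → ℝ) :
    (⨅ i, hM.eigenvalues i) * (v ⬝ᵥ v) ≤ v ⬝ᵥ (M *ᵥ v) := by
  rcases Nat.eq_zero_or_pos q with hq | hq
  · subst hq
    simp [dotProduct]
  · haveI : Nonempty (Fin q) := Fin.pos_iff_nonempty.mp hq
    set U : Matrix (Fin q) (Fin q) ℝ := (hM.eigenvectorUnitary : Matrix (Fin q) (Fin q) ℝ) with hU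
    set w : Fin q → ℝ := (star U) *ᵥ v with hw
    have hUU : U * star U = 1 := Matrix.mem_unitaryGroup_iff.mp hM.eigenvectorUnitary.2
    have hvMv : v ⬝ᵥ (M *ᵥ v) = ∑ i, hM.eigenvalues i * (w i * w i) := by
      conv_lhs => rw [hM.spectral_theorem, Unitary.conjStarAlgAut_apply]
      rw [← Matrix.mulVec_mulVec, ← Matrix.mulVec_mulVec, Matrix.dotProduct_mulVec]
      have hvU : v ᵥ* U = w := by
        rw [← Matrix.mulVec_transpose, hw, ← Matrix.conjTranspose_eq_transpose_of_trivial]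
        rfl
      rw [hvU]
      simp [Matrix.mulVec_diagonal, dotProduct, RCLike.ofReal_real_eq_id, mul_comm,
        mul_assoc, mul_left_comm]
      rfl
    have hww : w ⬝ᵥ w = v ⬝ᵥ v := by
      rw [hw, Matrix.dotProduct_mulVec ((star U) *ᵥ v) (star U) v, ← Matrix.mulVec_transpose,
        ← Matrix.conjTranspose_eq_transpose_of_trivial, Matrix.star_eq_conjTranspose,
        Matrix.conjTranspose_conjTranspose, Matrix.mulVec_mulVec,
        ← Matrix.star_eq_conjTranspose U, hUU, Matrix.one_mulVec]
    have hbdd : BddBelow (Set.range hM.eigenvalues) := (Set.finite_range _).bddBelow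
    have hmin : ∀ i, (⨅ j, hM.eigenvalues j) ≤ hM.eigenvalues i := fun i => ciInf_le hbdd i
    calc (⨅ i, hM.eigenvalues i) * (v ⬝ᵥ v) = ∑ i, (⨅ j, hM.eigenvalues j) * (w i * w i) := by
          rw [← hww]; simp [dotProduct, Finset.mul_sum]
      _ ≤ ∑ i, hM.eigenvalues i * (w i * w i) :=
          Finset.sum_le_sum fun i _ => mul_le_mul_of_nonneg_right (hmin i) (mul_self_nonneg _)
      _ = v ⬝ᵥ (M *ᵥ v) := hvMv.symm

lemma descent_lemma {n : ℕ} (f : EuclideanSpace ℝ (Fin n) → ℝ)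
    (f' : EuclideanSpace ℝ (Fin n) → EuclideanSpace ℝ (Fin n))
    (hdiff : ∀ x, HasGradientAt f (f' x) x) {L : ℝ}
    (hLip : ∀ x y, ‖f' y - f' x‖ ≤ L * ‖y - x‖) (x z : EuclideanSpace ℝ (Fin n)) :
    f z ≤ f x + ⟪f' x, z - x⟫ + L / 2 * ‖z - x‖ ^ 2 := by
  set d := z - x with hd
  have hline : ∀ s : ℝ, HasDerivAt (fun s : ℝ => x + s • d) d s := by
    intro s
    simpa using ((hasDerivAt_id s).smul_const d).const_add x
  have hφ : ∀ s : ℝ, HasDerivAt (fun s : ℝ => f (x + s • d)) ⟪f' (x + s • d), d⟫ s := by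
    intro s
    have h1 := (hdiff (x + s • d)).hasFDerivAt.comp_hasDerivAt s (hline s)
    simpa [InnerProductSpace.toDual_apply_apply, Function.comp_def] using h1
  set g : ℝ → ℝ := fun s => f (x + s • d) - s * ⟪f' x, d⟫ - L / 2 * s ^ 2 * ‖d‖ ^ 2 with hg
  have hg' : ∀ s : ℝ, HasDerivAt g
      (⟪f' (x + s • d), d⟫ - ⟪f' x, d⟫ - L * s * ‖d‖ ^ 2) s := by
    intro s
    have hq : HasDerivAt (fun s : ℝ => L / 2 * s ^ 2 * ‖d‖ ^ 2) (L * s * ‖d‖ ^ 2) s := by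
      have := ((hasDerivAt_pow 2 s).const_mul (L / 2)).mul_const (‖d‖ ^ 2)
      refine this.congr_deriv ?_
      ring
    have hlin : HasDerivAt (fun s : ℝ => s * ⟪f' x, d⟫) ⟪f' x, d⟫ s := by
      simpa using (hasDerivAt_id s).mul_const (⟪f' x, d⟫)
    exact ((hφ s).sub hlin).sub hq
  have hcont : ContinuousOn g (Set.Icc (0:ℝ) 1) :=
    (fun s _ => ((hg' s).differentiableAt.continuousAt.continuousWithinAt))
  have hanti : AntitoneOn g (Set.Icc (0:ℝ) 1) := by
    apply antitoneOn_of_deriv_nonpos (convex_Icc 0 1) hcont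
    · intro s hs
      exact ((hg' s).differentiableAt).differentiableWithinAt
    · intro s hs
      rw [interior_Icc] at hs
      rw [(hg' s).deriv]
      have h1 : ⟪f' (x + s • d), d⟫ - ⟪f' x, d⟫ = ⟪f' (x + s • d) - f' x, d⟫ := by
        rw [inner_sub_left]
      have h2 : ⟪f' (x + s • d) - f' x, d⟫ ≤ ‖f' (x + s • d) - f' x‖ * ‖d‖ :=
        real_inner_le_norm _ _
      have h3 : ‖f' (x + s • d) - f' x‖ ≤ L * (s * ‖d‖) := by
        have := hLip x (x + s • d)
        simpa [norm_smul, abs_of_nonneg hs.1.le] using this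
      have h4 : ‖f' (x + s • d) - f' x‖ * ‖d‖ ≤ L * (s * ‖d‖) * ‖d‖ :=
        mul_le_mul_of_nonneg_right h3 (norm_nonneg _)
      nlinarith [norm_nonneg d]
  have h01 := hanti (Set.left_mem_Icc.mpr zero_le_one) (Set.right_mem_Icc.mpr zero_le_one)
    zero_le_one
  have hg1 : g 1 = f z - ⟪f' x, d⟫ - L / 2 * ‖d‖ ^ 2 := by
    simp [hg, hd]
  have hg0 : g 0 = f x := by simp [hg]
  rw [hg1, hg0] at h01
  linarith


/-- Under (H1)-(H2) with `f` coercive, the dual function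
`θ(λ) = inf_x [f(x) + λᵀ(Ax − b)]` is strongly concave on the nonnegative
orthant `ℝ₊^q` with constant `λ_min(AAᵀ)/L` for the Euclidean norm. -/
theorem dual_function_strongly_concave_on_orthant
    {n q : ℕ} (f : EuclideanSpace ℝ (Fin n) → ℝ)
    (f' : EuclideanSpace ℝ (Fin n) → EuclideanSpace ℝ (Fin n))
    (hconv : ConvexOn ℝ Set.univ f)
    (hdiff : ∀ x, HasGradientAt f (f' x) x)
    (L : ℝ) (hL : 0 < L)
    (hLip : ∀ x y, ‖f' y - f' x‖ ≤ L * ‖y - x‖)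
    (hcoercive : ∀ M : ℝ, ∃ R : ℝ, ∀ x : EuclideanSpace ℝ (Fin n), R ≤ ‖x‖ → M ≤ f x)
    (A : Matrix (Fin q) (Fin n) ℝ)
    (hA : LinearIndependent ℝ A)
    (b : EuclideanSpace ℝ (Fin q))
    (θ : EuclideanSpace ℝ (Fin q) → EReal)
    (hθ : θ = fun lam => ⨅ x : EuclideanSpace ℝ (Fin n),
      ((f x + ∑ i, lam i * (A.mulVec x i - b i) : ℝ) : EReal)) :
    ∀ l1 l2 : EuclideanSpace ℝ (Fin q), (∀ i, 0 ≤ l1 i) → (∀ i, 0 ≤ l2 i) →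
      ∀ r1 r2 : ℝ, θ l1 = (r1 : EReal) → θ l2 = (r2 : EReal) →
      ∀ t : ℝ, 0 ≤ t → t ≤ 1 →
      ((t * r1 + (1 - t) * r2
        + (lambdaMin (A * Aᵀ) (Matrix.isHermitian_mul_conjTranspose_self A) / L)
          * (t * (1 - t)) / 2 * ‖l1 - l2‖ ^ 2 : ℝ) : EReal)
        ≤ θ (t • l1 + (1 - t) • l2) := by
  subst hθ
  intro l1 l2 _ _ r1 r2 h1 h2 t ht ht'
  have h1t : 0 ≤ 1 - t := by linarith
  set T : EuclideanSpace ℝ (Fin q) →ₗ[ℝ] EuclideanSpace ℝ (Fin n) :=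
    Matrix.toEuclideanLin Aᵀ with hT
  -- coordinate description of T
  have hTinner : ∀ (lam : EuclideanSpace ℝ (Fin q)) (z : EuclideanSpace ℝ (Fin n)),
      ⟪T lam, z⟫ = (Aᵀ *ᵥ (fun i => lam i)) ⬝ᵥ (fun j => z j) := by
    intro lam z
    simp only [hT, Matrix.toEuclideanLin_apply, PiLp.inner_apply, RCLike.inner_apply,
      conj_trivial, dotProduct]
    exact Finset.sum_congr rfl fun _ _ => mul_comm _ _
  -- F1
  have F1 : ∀ (lam : EuclideanSpace ℝ (Fin q)) (z : EuclideanSpace ℝ (Fin n)),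
      ∑ i, lam i * (A.mulVec z i - b i) = ⟪T lam, z⟫ - ∑ i, lam i * b i := by
    intro lam z
    have e1 : ∑ i, lam i * (A.mulVec z i - b i)
        = (fun i => lam i) ⬝ᵥ (A *ᵥ (fun j => z j)) - ∑ i, lam i * b i := by
      simp [dotProduct, mul_sub, Finset.sum_sub_distrib]
    rw [e1, Matrix.dotProduct_mulVec, ← Matrix.mulVec_transpose, hTinner]
  -- Rayleigh bound
  set m : ℝ := lambdaMin (A * Aᵀ) (Matrix.isHermitian_mul_conjTranspose_self A) with hm
  have Fray : m * ‖l1 - l2‖ ^ 2 ≤ ‖T l1 - T l2‖ ^ 2 := by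
    have hmap : T l1 - T l2 = T (l1 - l2) := (map_sub T l1 l2).symm
    have hn1 : ‖l1 - l2‖ ^ 2 = (fun i => (l1 - l2) i) ⬝ᵥ (fun i => (l1 - l2) i) := by
      rw [← real_inner_self_eq_norm_sq]
      simp only [PiLp.inner_apply, RCLike.inner_apply, conj_trivial, dotProduct]
    have hn2 : ‖T (l1 - l2)‖ ^ 2
        = (fun i => (l1 - l2) i) ⬝ᵥ ((A * Aᵀ) *ᵥ (fun i => (l1 - l2) i)) := by
      rw [← real_inner_self_eq_norm_sq, hTinner]
      have : (fun j => (T (l1 - l2)) j) = Aᵀ *ᵥ (fun i => (l1 - l2) i) := rfl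
      rw [this, Matrix.dotProduct_mulVec, Matrix.vecMul_transpose, Matrix.mulVec_mulVec,
        dotProduct_comm]
    rw [hmap, hn1, hn2, hm]
    exact rayleigh_min (A * Aᵀ) (Matrix.isHermitian_mul_conjTranspose_self A) _
  -- upper bounds from the infimum
  have hub1 : ∀ z, r1 ≤ f z + ∑ i, l1 i * (A.mulVec z i - b i) := by
    intro z
    have hle : (⨅ x : EuclideanSpace ℝ (Fin n),
        ((f x + ∑ i, l1 i * (A.mulVec x i - b i) : ℝ) : EReal))
        ≤ ((f z + ∑ i, l1 i * (A.mulVec z i - b i) : ℝ) : EReal) := iInf_le _ z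
    have h1' : (⨅ x : EuclideanSpace ℝ (Fin n),
        ((f x + ∑ i, l1 i * (A.mulVec x i - b i) : ℝ) : EReal)) = (r1 : EReal) := h1
    rw [h1'] at hle
    exact EReal.coe_le_coe_iff.mp hle
  have hub2 : ∀ z, r2 ≤ f z + ∑ i, l2 i * (A.mulVec z i - b i) := by
    intro z
    have hle : (⨅ x : EuclideanSpace ℝ (Fin n),
        ((f x + ∑ i, l2 i * (A.mulVec x i - b i) : ℝ) : EReal))
        ≤ ((f z + ∑ i, l2 i * (A.mulVec z i - b i) : ℝ) : EReal) := iInf_le _ z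
    have h2' : (⨅ x : EuclideanSpace ℝ (Fin n),
        ((f x + ∑ i, l2 i * (A.mulVec x i - b i) : ℝ) : EReal)) = (r2 : EReal) := h2
    rw [h2'] at hle
    exact EReal.coe_le_coe_iff.mp hle
  refine le_iInf fun x => ?_
  rw [EReal.coe_le_coe_iff]
  rw [F1]
  -- linearity of the pieces
  have hTlt : ⟪T (t • l1 + (1 - t) • l2), x⟫ = t * ⟪T l1, x⟫ + (1 - t) * ⟪T l2, x⟫ := by
    rw [map_add, map_smul, map_smul, inner_add_left, real_inner_smul_left, real_inner_smul_left]
  have hblt : ∑ i, (t • l1 + (1 - t) • l2) i * b i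
      = t * (∑ i, l1 i * b i) + (1 - t) * (∑ i, l2 i * b i) := by
    rw [Finset.mul_sum, Finset.mul_sum, ← Finset.sum_add_distrib]
    refine Finset.sum_congr rfl fun i _ => ?_
    simp [PiLp.add_apply, PiLp.smul_apply, smul_eq_mul]
    ring
  rw [hTlt, hblt]
  -- key construction
  set w : EuclideanSpace ℝ (Fin n) := T l1 - T l2 with hw
  set u : EuclideanSpace ℝ (Fin n) := (-(L⁻¹)) • w with hu
  set z1 : EuclideanSpace ℝ (Fin n) := x + (1 - t) • u with hz1
  set z2 : EuclideanSpace ℝ (Fin n) := x + (-t) • u with hz2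
  set W : ℝ := ‖w‖ ^ 2 with hW
  have hun : ‖u‖ ^ 2 = L⁻¹ ^ 2 * W := by
    rw [hu, norm_smul, mul_pow, hW]
    congr 1
    rw [Real.norm_eq_abs, sq_abs, neg_pow]
    ring
  have hK : L / 2 * ‖u‖ ^ 2 = L⁻¹ * W / 2 := by
    rw [hun]
    field_simp
  have hwu : ⟪w, u⟫ = -(L⁻¹ * W) := by
    rw [hu, real_inner_smul_right, real_inner_self_eq_norm_sq, ← hW]
    ring
  have hdw : ⟪T l1, u⟫ - ⟪T l2, u⟫ = -(L⁻¹ * W) := by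
    rw [← inner_sub_left, ← hw, hwu]
  have hD2 : ⟪T l2, u⟫ = ⟪T l1, u⟫ + L⁻¹ * W := by linarith
  -- descent bounds
  have hdz1 : f z1 ≤ f x + (1 - t) * ⟪f' x, u⟫ + (1 - t) ^ 2 * (L⁻¹ * W / 2) := by
    have := descent_lemma f f' hdiff hLip x z1
    have hz1x : z1 - x = (1 - t) • u := by rw [hz1]; abel
    rw [hz1x, real_inner_smul_right, norm_smul, mul_pow, Real.norm_eq_abs, sq_abs] at this
    calc f z1 ≤ f x + (1 - t) * ⟪f' x, u⟫ + L / 2 * ((1 - t) ^ 2 * ‖u‖ ^ 2) := this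
      _ = f x + (1 - t) * ⟪f' x, u⟫ + (1 - t) ^ 2 * (L / 2 * ‖u‖ ^ 2) := by ring
      _ = f x + (1 - t) * ⟪f' x, u⟫ + (1 - t) ^ 2 * (L⁻¹ * W / 2) := by rw [hK]
  have hdz2 : f z2 ≤ f x + (-t) * ⟪f' x, u⟫ + t ^ 2 * (L⁻¹ * W / 2) := by
    have := descent_lemma f f' hdiff hLip x z2
    have hz2x : z2 - x = (-t) • u := by rw [hz2]; abel
    rw [hz2x, real_inner_smul_right, norm_smul, mul_pow, Real.norm_eq_abs, sq_abs] at this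
    calc f z2 ≤ f x + (-t) * ⟪f' x, u⟫ + L / 2 * ((-t) ^ 2 * ‖u‖ ^ 2) := this
      _ = f x + (-t) * ⟪f' x, u⟫ + t ^ 2 * (L / 2 * ‖u‖ ^ 2) := by ring
      _ = f x + (-t) * ⟪f' x, u⟫ + t ^ 2 * (L⁻¹ * W / 2) := by rw [hK]
  -- inf bounds at z1, z2
  have h1' : r1 ≤ f z1 + (⟪T l1, x⟫ + (1 - t) * ⟪T l1, u⟫ - ∑ i, l1 i * b i) := by
    have := hub1 z1
    rw [F1] at this
    have e : ⟪T l1, z1⟫ = ⟪T l1, x⟫ + (1 - t) * ⟪T l1, u⟫ := by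
      rw [hz1, inner_add_right, real_inner_smul_right]
    linarith [this, e.le, e.ge]
  have h2' : r2 ≤ f z2 + (⟪T l2, x⟫ + (-t) * ⟪T l2, u⟫ - ∑ i, l2 i * b i) := by
    have := hub2 z2
    rw [F1] at this
    have e : ⟪T l2, z2⟫ = ⟪T l2, x⟫ + (-t) * ⟪T l2, u⟫ := by
      rw [hz2, inner_add_right, real_inner_smul_right]
    linarith [this, e.le, e.ge]
  -- combine
  have h1'' : r1 ≤ f x + (1 - t) * ⟪f' x, u⟫ + (1 - t) ^ 2 * (L⁻¹ * W / 2)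
      + (⟪T l1, x⟫ + (1 - t) * ⟪T l1, u⟫ - ∑ i, l1 i * b i) := by linarith
  have h2'' : r2 ≤ f x + (-t) * ⟪f' x, u⟫ + t ^ 2 * (L⁻¹ * W / 2)
      + (⟪T l2, x⟫ + (-t) * (⟪T l1, u⟫ + L⁻¹ * W) - ∑ i, l2 i * b i) := by
    rw [← hD2]; linarith
  have H1 := mul_le_mul_of_nonneg_left h1'' ht
  have H2 := mul_le_mul_of_nonneg_left h2'' h1t
  have hLinv : (0:ℝ) ≤ L⁻¹ := inv_nonneg.mpr hL.le
  have hray2 : m / L * (t * (1 - t)) / 2 * ‖l1 - l2‖ ^ 2 ≤ t * (1 - t) * (L⁻¹ * W) / 2 := by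
    have h0 : 0 ≤ t * (1 - t) * L⁻¹ / 2 := by positivity
    have := mul_le_mul_of_nonneg_left Fray h0
    calc m / L * (t * (1 - t)) / 2 * ‖l1 - l2‖ ^ 2
        = t * (1 - t) * L⁻¹ / 2 * (m * ‖l1 - l2‖ ^ 2) := by rw [div_eq_mul_inv m L]; ring
      _ ≤ t * (1 - t) * L⁻¹ / 2 * ‖T l1 - T l2‖ ^ 2 := this
      _ = t * (1 - t) * (L⁻¹ * W) / 2 := by rw [← hw, ← hW]; ring
  nlinarith [H1, H2, hray2]
end

section
/- Let f : ℝⁿ → ℝ be strongly convex on ℝⁿ with constant α > 0 with respect to the Euclidean norm, let A be a q × n real matrix, and b ∈ ℝ^q. For each λ ∈ ℝ^q let x(λ) denote the unique minimizer of x ↦ f(x) + λᵀ(Ax − b). Then the dual function θ(λ) = f(x(λ)) + λᵀ(Ax(λ) − b) is differentiable on ℝ^q with ∇θ(λ) = Ax(λ) − b, provided f is also differentiable. -/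
open scoped Matrix RealInnerProductSpace

section Aux

variable {n q : ℕ}

private lemma mulVec_comb (A : Matrix (Fin q) (Fin n) ℝ) (t : ℝ)
    (u v : EuclideanSpace ℝ (Fin n)) (i : Fin q) :
    A.mulVec (t • u + (1 - t) • v) i = t * A.mulVec u i + (1 - t) * A.mulVec v i := by
  simp only [Matrix.mulVec, dotProduct, Pi.add_apply, Pi.smul_apply, smul_eq_mul,
    Finset.mul_sum, ← Finset.sum_add_distrib]
  exact Finset.sum_congr rfl fun j _ => by ring

private lemma mulVec_sub' (A : Matrix (Fin q) (Fin n) ℝ)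
    (u v : EuclideanSpace ℝ (Fin n)) (i : Fin q) :
    A.mulVec (u - v) i = A.mulVec u i - A.mulVec v i := by
  simp only [Matrix.mulVec, dotProduct, Pi.sub_apply, ← Finset.sum_sub_distrib]
  exact Finset.sum_congr rfl fun j _ => by ring

private lemma euclid_inner_eq (u v : EuclideanSpace ℝ (Fin q)) : ⟪u, v⟫ = ∑ i, u i * v i := by
  simp [PiLp.inner_apply, RCLike.inner_apply, conj_trivial]
  exact Finset.sum_congr rfl fun _ _ => mul_comm _ _

end Aux

set_option maxHeartbeats 1000000 in
/-- If `f` is strongly convex (constant `α > 0`) and differentiable,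
and `x(λ)` is the (unique) minimizer of `x ↦ f(x) + λᵀ(Ax − b)`, then the dual
function `θ(λ) = f(x(λ)) + λᵀ(Ax(λ) − b)` is differentiable on `ℝ^q` with
`∇θ(λ) = Ax(λ) − b`. -/
theorem dual_function_gradient
    {n q : ℕ} (f : EuclideanSpace ℝ (Fin n) → ℝ)
    (f' : EuclideanSpace ℝ (Fin n) → EuclideanSpace ℝ (Fin n))
    (hdiff : ∀ x, HasGradientAt f (f' x) x)
    (α : ℝ) (hα : 0 < α)
    (hsc : ∀ x y : EuclideanSpace ℝ (Fin n), ∀ t : ℝ, 0 ≤ t → t ≤ 1 →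
      f (t • x + (1 - t) • y)
        ≤ t * f x + (1 - t) * f y - α * (t * (1 - t)) / 2 * ‖y - x‖ ^ 2)
    (A : Matrix (Fin q) (Fin n) ℝ)
    (b : EuclideanSpace ℝ (Fin q))
    (xmin : EuclideanSpace ℝ (Fin q) → EuclideanSpace ℝ (Fin n))
    (hxmin : ∀ lam x,
      f (xmin lam) + ∑ i, lam i * (A.mulVec (xmin lam) i - b i)
        ≤ f x + ∑ i, lam i * (A.mulVec x i - b i))
    (θ : EuclideanSpace ℝ (Fin q) → ℝ)
    (hθ : θ = fun lam => f (xmin lam) + ∑ i, lam i * (A.mulVec (xmin lam) i - b i)) :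
    ∀ lam, HasGradientAt θ
      (WithLp.toLp 2 (fun i => A.mulVec (xmin lam) i - b i : Fin q → ℝ) :
        EuclideanSpace ℝ (Fin q)) lam := by
  -- quadratic growth of the Lagrangian away from its minimizer
  have growth : ∀ (mu : EuclideanSpace ℝ (Fin q)) (z : EuclideanSpace ℝ (Fin n)),
      f (xmin mu) + (∑ i, mu i * (A.mulVec (xmin mu) i - b i)) + α / 4 * ‖z - xmin mu‖ ^ 2
        ≤ f z + ∑ i, mu i * (A.mulVec z i - b i) := by
    intro mu z
    have hmid := hsc z (xmin mu) (1/2) (by norm_num) (by norm_num)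
    have hsum : ∑ i, mu i * (A.mulVec ((1/2 : ℝ) • z + (1 - (1/2 : ℝ)) • xmin mu) i - b i)
        = (1/2 : ℝ) * (∑ i, mu i * (A.mulVec z i - b i))
          + (1 - (1/2 : ℝ)) * (∑ i, mu i * (A.mulVec (xmin mu) i - b i)) := by
      simp only [Finset.mul_sum, ← Finset.sum_add_distrib]
      exact Finset.sum_congr rfl fun i _ => by rw [mulVec_comb]; ring
    have hmin := hxmin mu ((1/2 : ℝ) • z + (1 - (1/2 : ℝ)) • xmin mu)
    simp only [WithLp.ofLp_add, WithLp.ofLp_smul] at hmin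
    rw [hsum] at hmin
    have hnorm : ‖xmin mu - z‖ = ‖z - xmin mu‖ := norm_sub_rev _ _
    rw [hnorm] at hmid
    have hcoef : α * (1/2 * (1 - 1/2)) / 2 * ‖z - xmin mu‖ ^ 2
        = α / 8 * ‖z - xmin mu‖ ^ 2 := by ring
    rw [hcoef] at hmid
    linarith [hmid, hmin]
  -- the (continuous) linear map given by `A`
  set T : EuclideanSpace ℝ (Fin n) →L[ℝ] EuclideanSpace ℝ (Fin q) :=
    LinearMap.toContinuousLinearMap (Matrix.toEuclideanLin A) with hT
  have hTapp : ∀ (v : EuclideanSpace ℝ (Fin n)) (i : Fin q), T v i = A.mulVec v i :=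
    fun v i => rfl
  have hK0 : (0:ℝ) ≤ ‖T‖ := norm_nonneg _
  intro lam
  set g : EuclideanSpace ℝ (Fin q) :=
    (WithLp.toLp 2 (fun i => A.mulVec (xmin lam) i - b i : Fin q → ℝ) : EuclideanSpace ℝ (Fin q)) with hg
  -- Lipschitz bound on the minimizer
  have key : ∀ mu : EuclideanSpace ℝ (Fin q),
      ‖xmin mu - xmin lam‖ ≤ 2 * ‖T‖ / α * ‖mu - lam‖ := by
    intro mu
    have h₁ := growth lam (xmin mu)
    have h₂ := growth mu (xmin lam)
    have hx12 : ‖xmin lam - xmin mu‖ = ‖xmin mu - xmin lam‖ := norm_sub_rev _ _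
    rw [hx12] at h₂
    -- the cross inequality
    have hcross : α / 2 * ‖xmin mu - xmin lam‖ ^ 2
        ≤ ∑ i, (mu i - lam i) * (A.mulVec (xmin lam) i - A.mulVec (xmin mu) i) := by
      have hsum' : ∑ i, (mu i - lam i) * (A.mulVec (xmin lam) i - A.mulVec (xmin mu) i)
          = (∑ i, mu i * (A.mulVec (xmin lam) i - b i))
              - (∑ i, mu i * (A.mulVec (xmin mu) i - b i))
            - ((∑ i, lam i * (A.mulVec (xmin lam) i - b i))
              - (∑ i, lam i * (A.mulVec (xmin mu) i - b i))) := by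
        simp only [← Finset.sum_sub_distrib]
        exact Finset.sum_congr rfl fun i _ => by ring
      rw [hsum']
      linarith [h₁, h₂]
    have hinner : ∑ i, (mu i - lam i) * (A.mulVec (xmin lam) i - A.mulVec (xmin mu) i)
        = ⟪mu - lam, T (xmin lam - xmin mu)⟫ := by
      rw [euclid_inner_eq]
      exact Finset.sum_congr rfl fun i _ => by
        rw [hTapp, WithLp.ofLp_sub (x := xmin lam) (y := xmin mu), mulVec_sub' A (xmin lam) (xmin mu) i]; simp [PiLp.sub_apply]
    have hCS : ⟪mu - lam, T (xmin lam - xmin mu)⟫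
        ≤ ‖mu - lam‖ * (‖T‖ * ‖xmin mu - xmin lam‖) := by
      calc ⟪mu - lam, T (xmin lam - xmin mu)⟫
          ≤ ‖mu - lam‖ * ‖T (xmin lam - xmin mu)‖ := real_inner_le_norm _ _
        _ ≤ ‖mu - lam‖ * (‖T‖ * ‖xmin mu - xmin lam‖) := by
            have h := T.le_opNorm (xmin lam - xmin mu)
            rw [hx12] at h
            exact mul_le_mul_of_nonneg_left h (norm_nonneg _)
    have hmain : α / 2 * ‖xmin mu - xmin lam‖ ^ 2
        ≤ ‖mu - lam‖ * (‖T‖ * ‖xmin mu - xmin lam‖) := le_trans (by rw [← hinner]; exact hcross) hCS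
    rcases eq_or_lt_of_le (norm_nonneg (xmin mu - xmin lam)) with h0 | h0
    · rw [← h0]
      positivity
    · have h' : (α / 2 * ‖xmin mu - xmin lam‖) * ‖xmin mu - xmin lam‖
          ≤ (‖mu - lam‖ * ‖T‖) * ‖xmin mu - xmin lam‖ := by
        have e1 : (α / 2 * ‖xmin mu - xmin lam‖) * ‖xmin mu - xmin lam‖
            = α / 2 * ‖xmin mu - xmin lam‖ ^ 2 := by ring
        have e2 : (‖mu - lam‖ * ‖T‖) * ‖xmin mu - xmin lam‖
            = ‖mu - lam‖ * (‖T‖ * ‖xmin mu - xmin lam‖) := by ring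
        rw [e1, e2]; exact hmain
      have h'' := le_of_mul_le_mul_right h' h0
      rw [div_mul_eq_mul_div, le_div_iff₀ hα]
      linarith
  -- error bound for the linearization of θ
  have herr : ∀ mu : EuclideanSpace ℝ (Fin q),
      |θ mu - θ lam - ⟪g, mu - lam⟫| ≤ 2 * ‖T‖ ^ 2 / α * ‖mu - lam‖ ^ 2 := by
    intro mu
    have hginner : ⟪g, mu - lam⟫ = ∑ i, (mu i - lam i) * (A.mulVec (xmin lam) i - b i) := by
      rw [euclid_inner_eq]
      exact Finset.sum_congr rfl fun i _ => by
        simp only [hg, PiLp.sub_apply, PiLp.toLp_apply]; ring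
    have hθmu : θ mu = f (xmin mu) + ∑ i, mu i * (A.mulVec (xmin mu) i - b i) := by rw [hθ]
    have hθlam : θ lam = f (xmin lam) + ∑ i, lam i * (A.mulVec (xmin lam) i - b i) := by rw [hθ]
    -- upper bound : θ mu ≤ θ lam + ⟪g, mu - lam⟫
    have hup : θ mu - θ lam - ⟪g, mu - lam⟫ ≤ 0 := by
      have h := hxmin mu (xmin lam)
      have hsplit : ∑ i, mu i * (A.mulVec (xmin lam) i - b i)
          = (∑ i, lam i * (A.mulVec (xmin lam) i - b i))
            + ∑ i, (mu i - lam i) * (A.mulVec (xmin lam) i - b i) := by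
        rw [← Finset.sum_add_distrib]
        exact Finset.sum_congr rfl fun i _ => by ring
      rw [hθmu, hθlam, hginner]
      linarith [h, hsplit]
    -- lower bound
    have hlow : -(2 * ‖T‖ ^ 2 / α * ‖mu - lam‖ ^ 2) ≤ θ mu - θ lam - ⟪g, mu - lam⟫ := by
      have h := hxmin lam (xmin mu)
      have hsplit : ∑ i, lam i * (A.mulVec (xmin mu) i - b i)
          = (∑ i, mu i * (A.mulVec (xmin mu) i - b i))
            - ∑ i, (mu i - lam i) * (A.mulVec (xmin mu) i - b i) := by
        rw [← Finset.sum_sub_distrib]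
        exact Finset.sum_congr rfl fun i _ => by ring
      have hdiffsum : ∑ i, (mu i - lam i) * (A.mulVec (xmin mu) i - b i)
          = ⟪g, mu - lam⟫
            - ∑ i, (mu i - lam i) * (A.mulVec (xmin lam) i - A.mulVec (xmin mu) i) := by
        rw [hginner, ← Finset.sum_sub_distrib]
        exact Finset.sum_congr rfl fun i _ => by ring
      have hdist : ∑ i, (mu i - lam i) * (A.mulVec (xmin lam) i - A.mulVec (xmin mu) i)
          ≤ 2 * ‖T‖ ^ 2 / α * ‖mu - lam‖ ^ 2 := by
        have hinner : ∑ i, (mu i - lam i) * (A.mulVec (xmin lam) i - A.mulVec (xmin mu) i)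
            = ⟪mu - lam, T (xmin lam - xmin mu)⟫ := by
          rw [euclid_inner_eq]
          exact Finset.sum_congr rfl fun i _ => by
            rw [hTapp, WithLp.ofLp_sub (x := xmin lam) (y := xmin mu), mulVec_sub' A (xmin lam) (xmin mu) i]; simp [PiLp.sub_apply]
        rw [hinner]
        have h1 : ⟪mu - lam, T (xmin lam - xmin mu)⟫
            ≤ ‖mu - lam‖ * ‖T (xmin lam - xmin mu)‖ := real_inner_le_norm _ _
        have h2 : ‖T (xmin lam - xmin mu)‖ ≤ ‖T‖ * ‖xmin lam - xmin mu‖ := T.le_opNorm _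
        have h3 : ‖xmin lam - xmin mu‖ = ‖xmin mu - xmin lam‖ := norm_sub_rev _ _
        have h4 := key mu
        have h5 : ‖T (xmin lam - xmin mu)‖ ≤ ‖T‖ * (2 * ‖T‖ / α * ‖mu - lam‖) := by
          calc ‖T (xmin lam - xmin mu)‖ ≤ ‖T‖ * ‖xmin lam - xmin mu‖ := h2
            _ ≤ ‖T‖ * (2 * ‖T‖ / α * ‖mu - lam‖) := by
                rw [h3]; exact mul_le_mul_of_nonneg_left h4 hK0
        calc ⟪mu - lam, T (xmin lam - xmin mu)⟫
            ≤ ‖mu - lam‖ * ‖T (xmin lam - xmin mu)‖ := h1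
          _ ≤ ‖mu - lam‖ * (‖T‖ * (2 * ‖T‖ / α * ‖mu - lam‖)) :=
              mul_le_mul_of_nonneg_left h5 (norm_nonneg _)
          _ = 2 * ‖T‖ ^ 2 / α * ‖mu - lam‖ ^ 2 := by field_simp
      rw [hθmu, hθlam]
      linarith [h, hsplit, hdiffsum, hdist]
    have hQ : (0:ℝ) ≤ 2 * ‖T‖ ^ 2 / α * ‖mu - lam‖ ^ 2 := by positivity
    rw [abs_le]
    exact ⟨hlow, le_trans hup hQ⟩
  -- conclude differentiability from the quadratic error bound
  rw [hasGradientAt_iff_hasFDerivAt, hasFDerivAt_iff_isLittleO, Asymptotics.isLittleO_iff]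
  intro c hc
  set C : ℝ := 2 * ‖T‖ ^ 2 / α + 1 with hC
  have hC0 : 0 < C := by positivity
  have hball : Metric.ball lam (c / C) ∈ nhds lam := Metric.ball_mem_nhds lam (by positivity)
  filter_upwards [hball] with mu hmu
  have hd : ‖mu - lam‖ < c / C := by
    rw [Metric.mem_ball, dist_eq_norm] at hmu; exact hmu
  have h1 := herr mu
  have h2 : InnerProductSpace.toDual ℝ (EuclideanSpace ℝ (Fin q)) g (mu - lam) = ⟪g, mu - lam⟫ :=
    rfl
  rw [Real.norm_eq_abs, h2]
  have h3 : 2 * ‖T‖ ^ 2 / α * ‖mu - lam‖ ^ 2 ≤ C * ‖mu - lam‖ ^ 2 := by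
    nlinarith [sq_nonneg ‖mu - lam‖]
  have h4 : C * ‖mu - lam‖ ^ 2 ≤ c * ‖mu - lam‖ := by
    have h5 := norm_nonneg (mu - lam)
    have h6 : ‖mu - lam‖ * C ≤ c := by
      rw [← le_div_iff₀ hC0]; exact hd.le
    nlinarith
  calc |θ mu - θ lam - ⟪g, mu - lam⟫| ≤ 2 * ‖T‖ ^ 2 / α * ‖mu - lam‖ ^ 2 := h1
    _ ≤ C * ‖mu - lam‖ ^ 2 := h3
    _ ≤ c * ‖mu - lam‖ := h4
end

section
/- Let f : ℝⁿ → ℝ be twice continuously differentiable, strongly convex on ℝⁿ with constant α > 0 with respect to the Euclidean norm, and with ∇f Lipschitz continuous on ℝⁿ. Let A be a q × n real matrix whose rows are linearly independent and b ∈ ℝ^q, and for λ ∈ ℝ^q let x(λ) be the unique minimizer of x ↦ f(x) + λᵀ(Ax − b). Then for every λ ∈ ℝ^q the matrix A[∇²f(x(λ))]⁻¹Aᵀ is positive definite and satisfies λ_min( A[∇²f(x(λ))]⁻¹Aᵀ ) ≤ λ_min(AAᵀ)/α. Consequently, if the dual function θ(λ) = inf_{x ∈ ℝⁿ} [ f(x)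 + λᵀ(Ax − b) ] is strongly concave on ℝ^q with constant β > 0 with respect to the Euclidean norm, then β ≤ λ_min(AAᵀ)/α. -/
open scoped Matrix

open Matrix Filter

section Aux

lemma euclid_norm_sq {m : ℕ} (v : EuclideanSpace ℝ (Fin m)) : ‖v‖^2 = ∑ i, v i ^ 2 := by
  rw [EuclideanSpace.norm_eq, Real.sq_sqrt (by positivity)]
  simp [sq]

lemma rayleigh_lower {q : ℕ} (hq : 0 < q) (N : Matrix (Fin q) (Fin q) ℝ) (hN : N.IsHermitian)
    (v : EuclideanSpace ℝ (Fin q)) :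
    (⨅ j, hN.eigenvalues j) * ‖v‖^2 ≤ ∑ j, v j * N.mulVec v j := by
  have : Nonempty (Fin q) := ⟨⟨0, hq⟩⟩
  set b := hN.eigenvectorBasis with hb
  set c : Fin q → ℝ := fun i => b.repr v i with hc
  have hv : (v : Fin q → ℝ) = ∑ i, c i • (b i : Fin q → ℝ) := by
    have := b.sum_repr v
    have h2 := congrArg (fun z : EuclideanSpace ℝ (Fin q) => (z : Fin q → ℝ)) this.symm
    simpa [c, WithLp.ofLp_sum] using h2
  have hmv : N.mulVec v = ∑ i, (c i * hN.eigenvalues i) • (b i : Fin q → ℝ) := by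
    calc N.mulVec v = N.mulVecLin (∑ i, c i • (b i : Fin q → ℝ)) := by rw [← hv]; rfl
      _ = ∑ i, c i • N.mulVec (b i : Fin q → ℝ) := by
          rw [map_sum]; apply Finset.sum_congr rfl; intros; rw [_root_.map_smul]; rfl
      _ = ∑ i, (c i * hN.eigenvalues i) • (b i : Fin q → ℝ) := by
          apply Finset.sum_congr rfl; intros i _
          have h : N.mulVec (b i) = hN.eigenvalues i • (b i : Fin q → ℝ) :=
            hN.mulVec_eigenvectorBasis i
          rw [h, smul_smul]
  have hinner : ∀ i, ∑ j, (b i : Fin q → ℝ) j * v j = c i := by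
    intro i
    have := b.repr_apply_apply v i
    rw [hc]
    simp only [this, PiLp.inner_apply, RCLike.inner_apply, starRingEnd_apply, star_trivial]
    exact Finset.sum_congr rfl fun _ _ => mul_comm _ _
  have key : ∑ j, v j * N.mulVec v j = ∑ i, hN.eigenvalues i * c i ^ 2 := by
    rw [hmv]
    calc ∑ j, v j * (∑ i, (c i * hN.eigenvalues i) • (b i : Fin q → ℝ)) j
        = ∑ j, ∑ i, (c i * hN.eigenvalues i) * ((b i : Fin q → ℝ) j * v j) := by
          apply Finset.sum_congr rfl; intros j _
          rw [Finset.sum_apply, Finset.mul_sum]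
          apply Finset.sum_congr rfl; intros i _
          show v j * ((c i * hN.eigenvalues i) * (b i : Fin q → ℝ) j) = _; ring
      _ = ∑ i, ∑ j, (c i * hN.eigenvalues i) * ((b i : Fin q → ℝ) j * v j) := Finset.sum_comm
      _ = ∑ i, hN.eigenvalues i * c i ^ 2 := by
          apply Finset.sum_congr rfl; intros i _
          rw [← Finset.mul_sum, hinner i]; ring
  have hnorm : ‖v‖^2 = ∑ i, c i ^ 2 := by
    have h1 : ‖v‖ = ‖b.repr v‖ := (b.repr.norm_map v).symm
    rw [h1, EuclideanSpace.norm_eq, Real.sq_sqrt (by positivity)]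
    simp [hc, sq]
  rw [key, hnorm, Finset.mul_sum]
  apply Finset.sum_le_sum
  intro i _
  have hle : (⨅ j, hN.eigenvalues j) ≤ hN.eigenvalues i := ciInf_le (Finite.bddBelow_range _) i
  nlinarith [sq_nonneg (c i)]

lemma exists_unit_eigvec {q n : ℕ} (hq : 0 < q) (A : Matrix (Fin q) (Fin n) ℝ) :
    ∃ u : EuclideanSpace ℝ (Fin q), ‖u‖ = 1 ∧
      ∑ j, (Aᵀ.mulVec u) j ^ 2
        = lambdaMin (A * Aᵀ) (Matrix.isHermitian_mul_conjTranspose_self A) := by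
  have : Nonempty (Fin q) := ⟨⟨0, hq⟩⟩
  set hM := Matrix.isHermitian_mul_conjTranspose_self A with hMdef
  obtain ⟨i₀, hi₀⟩ := Finite.exists_min hM.eigenvalues
  refine ⟨hM.eigenvectorBasis i₀, hM.eigenvectorBasis.orthonormal.1 i₀, ?_⟩
  have hlam : lambdaMin (A*Aᵀ) hM = hM.eigenvalues i₀ :=
    le_antisymm (ciInf_le (Finite.bddBelow_range _) i₀) (le_ciInf hi₀)
  set u : EuclideanSpace ℝ (Fin q) := hM.eigenvectorBasis i₀ with hu
  have hmv : (A*Aᵀ).mulVec u = hM.eigenvalues i₀ • (u : Fin q → ℝ) :=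
    hM.mulVec_eigenvectorBasis i₀
  have e1 : ∑ j, (Aᵀ.mulVec u) j ^2 = dotProduct (Aᵀ.mulVec (u : Fin q → ℝ)) (Aᵀ.mulVec u) := by
    simp [dotProduct, sq]
  have e2 : dotProduct (Aᵀ.mulVec (u : Fin q → ℝ)) (Aᵀ.mulVec u)
      = dotProduct (u : Fin q → ℝ) ((A*Aᵀ).mulVec u) := by
    rw [← Matrix.mulVec_mulVec, Matrix.dotProduct_mulVec (u : Fin q → ℝ),
      Matrix.mulVec_transpose]
  have e4 : dotProduct (u : Fin q → ℝ) u = 1 := by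
    have h1 : ‖u‖^2 = ∑ j, u j ^2 := euclid_norm_sq u
    have h2 : ‖u‖ = 1 := hM.eigenvectorBasis.orthonormal.1 i₀
    rw [h2, one_pow] at h1
    simpa [dotProduct, sq] using h1.symm
  rw [e1, e2, hmv, hlam]
  have e3 : dotProduct (u : Fin q → ℝ) (hM.eigenvalues i₀ • (u : Fin q → ℝ))
      = hM.eigenvalues i₀ * dotProduct (u : Fin q → ℝ) u := dotProduct_smul _ _ _
  rw [e3, e4, mul_one]

lemma grad_lower {n : ℕ} (f : EuclideanSpace ℝ (Fin n) → ℝ)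
    (f' : EuclideanSpace ℝ (Fin n) → EuclideanSpace ℝ (Fin n))
    (hgrad : ∀ x, HasGradientAt f (f' x) x) (α : ℝ)
    (hsc : ∀ x y : EuclideanSpace ℝ (Fin n), ∀ t : ℝ, 0 ≤ t → t ≤ 1 →
      f (t • x + (1 - t) • y) ≤ t * f x + (1 - t) * f y - α * (t * (1 - t)) / 2 * ‖y - x‖ ^ 2) :
    ∀ x y, f x + inner ℝ (f' x) (y - x) + α / 2 * ‖y - x‖ ^ 2 ≤ (f y : ℝ) := by
  intro x y
  set u : EuclideanSpace ℝ (Fin n) := y - x with hu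
  have hcurve : ∀ t : ℝ, x + t • u = t • y + (1 - t) • x := by intro t; rw [hu]; module
  have hderiv : HasDerivAt (fun t : ℝ => f (x + t • u)) (inner ℝ (f' x) u) 0 := by
    have hc : HasDerivAt (fun t : ℝ => x + t • u) u 0 := by
      simpa using ((hasDerivAt_id (0:ℝ)).smul_const u).const_add x
    have h2 := (hgrad x).hasFDerivAt
    have h3 : x = x + (0:ℝ) • u := by simp
    rw [h3] at h2
    have h4 := h2.comp_hasDerivAt 0 hc
    exact (by simpa [InnerProductSpace.toDual_apply_apply] using h4 :
      HasDerivAt (f ∘ fun t : ℝ => x + t • u) (inner ℝ (f' x) u) 0)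
  have hne : (nhdsWithin (0:ℝ) (Set.Ioi 0)) ≤ nhdsWithin (0:ℝ) {(0:ℝ)}ᶜ :=
    nhdsWithin_mono _ fun t ht => ne_of_gt ht
  have hlim1 : Tendsto (fun t : ℝ => (f (x + t • u) - f x)/t)
      (nhdsWithin (0:ℝ) (Set.Ioi 0)) (nhds (inner ℝ (f' x) u)) := by
    have h5 := hasDerivAt_iff_tendsto_slope.mp hderiv
    refine ((h5.mono_left hne)).congr ?_
    intro t
    simp [slope_def_field]
  have hlim2 : Tendsto (fun t : ℝ => f y - f x - α*(1-t)/2*‖u‖^2)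
      (nhdsWithin (0:ℝ) (Set.Ioi 0)) (nhds (f y - f x - α/2*‖u‖^2)) := by
    have hcont : Continuous (fun t : ℝ => f y - f x - α*(1-t)/2*‖u‖^2) := by continuity
    have h6 := (hcont.tendsto 0).mono_left (nhdsWithin_le_nhds (s := Set.Ioi (0:ℝ)))
    simpa using h6
  have hev : ∀ᶠ t in nhdsWithin (0:ℝ) (Set.Ioi 0),
      (f (x + t • u) - f x)/t ≤ f y - f x - α*(1-t)/2*‖u‖^2 := by
    filter_upwards [Ioc_mem_nhdsGT_of_mem (Set.mem_Ico.mpr ⟨le_rfl, one_pos⟩)] with t ht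
    have hsct := hsc y x t (le_of_lt ht.1) ht.2
    rw [← hcurve t] at hsct
    have hxy : ‖x - y‖ = ‖u‖ := by rw [hu, norm_sub_rev]
    rw [hxy] at hsct
    rw [div_le_iff₀ ht.1]
    nlinarith [ht.1]
  have hfin := le_of_tendsto_of_tendsto hlim1 hlim2 hev
  nlinarith [hfin]

lemma hess_lower {n : ℕ} (f : EuclideanSpace ℝ (Fin n) → ℝ)
    (f' : EuclideanSpace ℝ (Fin n) → EuclideanSpace ℝ (Fin n))
    (Hess : EuclideanSpace ℝ (Fin n) → Matrix (Fin n) (Fin n) ℝ)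
    (hhess : ∀ x, HasFDerivAt f' (Matrix.toEuclideanCLM (𝕜 := ℝ) (Hess x)) x)
    (α : ℝ)
    (hg : ∀ x y, f x + inner ℝ (f' x) (y - x) + α / 2 * ‖y - x‖ ^ 2 ≤ (f y : ℝ)) :
    ∀ x (u : EuclideanSpace ℝ (Fin n)), α * ‖u‖^2 ≤ ∑ j, u j * (Hess x).mulVec u j := by
  have hmono : ∀ x y : EuclideanSpace ℝ (Fin n),
      α * ‖y - x‖^2 ≤ (inner ℝ (f' y - f' x) (y - x) : ℝ) := by
    intro x y
    have h1 := hg x y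
    have h2 := hg y x
    have e1 : (inner ℝ (f' y - f' x) (y-x) : ℝ)
        = inner ℝ (f' y) (y - x) - inner ℝ (f' x) (y - x) := inner_sub_left _ _ _
    have e2 : (inner ℝ (f' y) (x - y) : ℝ) = - inner ℝ (f' y) (y - x) := by
      rw [show x - y = -(y-x) by abel, inner_neg_right]
    have e3 : ‖x - y‖ = ‖y - x‖ := norm_sub_rev _ _
    rw [e3] at h2
    rw [e2] at h2
    linarith
  intro x u
  have hne : (nhdsWithin (0:ℝ) (Set.Ioi 0)) ≤ nhdsWithin (0:ℝ) {(0:ℝ)}ᶜ :=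
    nhdsWithin_mono _ fun t ht => ne_of_gt ht
  have hc : HasDerivAt (fun t : ℝ => x + t • u) u 0 := by
    simpa using ((hasDerivAt_id (0:ℝ)).smul_const u).const_add x
  set H := Matrix.toEuclideanCLM (𝕜 := ℝ) (Hess x) with hH
  have hd : HasDerivAt (fun t : ℝ => f' (x + t • u)) (H u) 0 := by
    have h2 := hhess x
    have h3 : x = x + (0:ℝ) • u := by simp
    rw [h3] at h2
    exact (hhess x).comp_hasDerivAt_of_eq 0 hc (by simp)
  have hlim : Tendsto (fun t : ℝ => (inner ℝ (t⁻¹ • (f' (x + t • u) - f' x)) u : ℝ))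
      (nhdsWithin (0:ℝ) (Set.Ioi 0)) (nhds (inner ℝ (H u) u)) := by
    have h5 := hasDerivAt_iff_tendsto_slope.mp hd
    have h6 := h5.mono_left hne
    have h7 : Tendsto (fun t : ℝ => t⁻¹ • (f' (x + t • u) - f' x))
        (nhdsWithin (0:ℝ) (Set.Ioi 0)) (nhds (H u)) := by
      refine h6.congr ?_
      intro t
      simp [slope_def_module]
    exact h7.inner tendsto_const_nhds
  have hev : ∀ᶠ t in nhdsWithin (0:ℝ) (Set.Ioi 0),
      α * ‖u‖^2 ≤ (inner ℝ (t⁻¹ • (f' (x + t • u) - f' x)) u : ℝ) := by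
    filter_upwards [self_mem_nhdsWithin] with t ht
    have hm := hmono x (x + t • u)
    have e4 : (x + t • u) - x = t • u := by abel
    rw [e4] at hm
    have e5 : ‖t • u‖^2 = t^2 * ‖u‖^2 := by
      rw [norm_smul]; simp [Real.norm_eq_abs, mul_pow, sq_abs]
    rw [e5] at hm
    have e6 : (inner ℝ (f' (x + t • u) - f' x) (t • u) : ℝ)
        = t * inner ℝ (f' (x + t • u) - f' x) u := real_inner_smul_right _ _ _
    rw [e6] at hm
    have ht' : (0:ℝ) < t := ht
    have e7 : (inner ℝ (t⁻¹ • (f' (x + t • u) - f' x)) u : ℝ)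
        = t⁻¹ * inner ℝ (f' (x + t • u) - f' x) u := real_inner_smul_left _ _ _
    rw [e7, inv_mul_eq_div, le_div_iff₀ ht']
    nlinarith [hm]
  have hfin := le_of_tendsto_of_tendsto tendsto_const_nhds hlim hev
  have happ : (H u : Fin n → ℝ) = (Hess x).mulVec u := rfl
  have e8 : (inner ℝ (H u) u : ℝ) = ∑ j, u j * (Hess x).mulVec u j := by
    simp only [PiLp.inner_apply, RCLike.inner_apply, starRingEnd_apply, star_trivial]
    refine Finset.sum_congr rfl fun j _ => ?_
    rw [show H u j = (Hess x).mulVec u j from congrFun happ j]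
  rw [← e8]; exact hfin

lemma hess_herm {n : ℕ} (f : EuclideanSpace ℝ (Fin n) → ℝ)
    (f' : EuclideanSpace ℝ (Fin n) → EuclideanSpace ℝ (Fin n))
    (Hess : EuclideanSpace ℝ (Fin n) → Matrix (Fin n) (Fin n) ℝ)
    (hgrad : ∀ x, HasGradientAt f (f' x) x)
    (hhess : ∀ x, HasFDerivAt f' (Matrix.toEuclideanCLM (𝕜 := ℝ) (Hess x)) x) :
    ∀ x, (Hess x).IsHermitian := by
  intro x
  set H := Matrix.toEuclideanCLM (𝕜 := ℝ) (Hess x) with hH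
  set TD : EuclideanSpace ℝ (Fin n) →L[ℝ] (EuclideanSpace ℝ (Fin n) →L[ℝ] ℝ) :=
    (InnerProductSpace.toDual ℝ (EuclideanSpace ℝ (Fin n))).toContinuousLinearEquiv.toContinuousLinearMap with hTD
  have hf' : ∀ y, HasFDerivAt f (TD (f' y)) y := fun y => (hgrad y).hasFDerivAt
  have hD : HasFDerivAt (fun y => TD (f' y)) (TD.comp H) x := TD.hasFDerivAt.comp x (hhess x)
  have hsym := second_derivative_symmetric hf' hD
  have hsym' : ∀ v w : EuclideanSpace ℝ (Fin n), (inner ℝ (H v) w : ℝ) = inner ℝ (H w) v := by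
    intro v w
    have h := hsym v w
    simpa [hTD, InnerProductSpace.toDual_apply_apply] using h
  have key : ∀ i j, Hess x i j = Hess x j i := by
    intro i j
    have h := hsym' (EuclideanSpace.single j 1) (EuclideanSpace.single i 1)
    have happ : ∀ v : EuclideanSpace ℝ (Fin n), (H v : Fin n → ℝ) = (Hess x).mulVec v :=
      fun _ => rfl
    simp only [PiLp.inner_apply, RCLike.inner_apply, starRingEnd_apply, star_trivial] at h
    have e : ∀ a b : Fin n, ∑ k, H (EuclideanSpace.single a 1) k * EuclideanSpace.single b 1 k
        = Hess x b a := by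
      intro a b
      rw [Finset.sum_eq_single b]
      · rw [congrFun (happ _) b]
        simp [Matrix.mulVec, dotProduct, EuclideanSpace.single_apply]
      · intro k _ hk; simp [EuclideanSpace.single_apply, hk]
      · simp
    have e' : ∀ a b : Fin n, ∑ k, (EuclideanSpace.single b (1:ℝ) : EuclideanSpace ℝ (Fin n)) k
        * H (EuclideanSpace.single a 1) k = Hess x b a := fun a b => by
      rw [← e a b]; exact Finset.sum_congr rfl fun _ _ => mul_comm _ _
    rw [e', e'] at h
    exact h
  exact Matrix.IsHermitian.ext fun i j => by rw [star_trivial]; exact key j i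

lemma min_quad {n : ℕ} (f : EuclideanSpace ℝ (Fin n) → ℝ) (α : ℝ) (hα : 0 < α)
    (hsc : ∀ x y : EuclideanSpace ℝ (Fin n), ∀ t : ℝ, 0 ≤ t → t ≤ 1 →
      f (t • x + (1 - t) • y) ≤ t * f x + (1 - t) * f y - α * (t * (1 - t)) / 2 * ‖y - x‖ ^ 2)
    (x₀ : EuclideanSpace ℝ (Fin n)) (hmin : ∀ x, f x₀ ≤ f x) :
    ∀ x, f x₀ + α/2 * ‖x - x₀‖^2 ≤ f x := by
  intro x
  by_contra hcon
  push_neg at hcon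
  set S := ‖x - x₀‖^2 with hSdef
  have hS : 0 ≤ S := sq_nonneg _
  have hc0 : 0 ≤ f x - f x₀ := sub_nonneg.2 (hmin x)
  have hSpos : 0 < S := by nlinarith
  set c := f x - f x₀ with hcdef
  have hclt : c < α/2 * S := by rw [hcdef]; linarith
  set t := (α*S - 2*c)/(2*α*S) with htdef
  have htpos : 0 < t := div_pos (by nlinarith) (by positivity)
  have ht1 : t ≤ 1 := by rw [htdef, div_le_one (by positivity)]; nlinarith
  have h := hsc x x₀ t (le_of_lt htpos) ht1
  have hm := hmin (t • x + (1 - t) • x₀)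
  have hnn : ‖x₀ - x‖^2 = S := by rw [hSdef, norm_sub_rev]
  rw [hnn] at h
  have hq : α*(t*(1-t))/2*S ≤ t*c := by rw [hcdef]; linarith
  have h2 : α*(1-t)/2*S ≤ c := by
    have hre : α*(t*(1-t))/2*S = t*(α*(1-t)/2*S) := by ring
    rw [hre] at hq
    exact le_of_mul_le_mul_left hq htpos
  have ht' : t * (2*α*S) = α*S - 2*c := by
    rw [htdef]; field_simp
  nlinarith [h2, ht']

end Aux

set_option maxHeartbeats 1600000 in
/-- For `f` twice continuously differentiable, strongly convex with
constant `α > 0`, with Lipschitz gradient, and `A` with linearly independent rows,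
the matrix `A[∇²f(x(λ))]⁻¹Aᵀ` is positive definite with
`λ_min(A[∇²f(x(λ))]⁻¹Aᵀ) ≤ λ_min(AAᵀ)/α`; consequently any strong concavity
constant `β > 0` of the dual function `θ` satisfies `β ≤ λ_min(AAᵀ)/α`. -/
theorem dual_strong_concavity_constant_upper_bound
    {n q : ℕ} (hq : 0 < q)
    (f : EuclideanSpace ℝ (Fin n) → ℝ)
    (f' : EuclideanSpace ℝ (Fin n) → EuclideanSpace ℝ (Fin n))
    (Hess : EuclideanSpace ℝ (Fin n) → Matrix (Fin n) (Fin n) ℝ)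
    (hf : ContDiff ℝ 2 f)
    (hgrad : ∀ x, HasGradientAt f (f' x) x)
    (hhess : ∀ x, HasFDerivAt f' (Matrix.toEuclideanCLM (𝕜 := ℝ) (Hess x)) x)
    (α : ℝ) (hα : 0 < α)
    (hsc : ∀ x y : EuclideanSpace ℝ (Fin n), ∀ t : ℝ, 0 ≤ t → t ≤ 1 →
      f (t • x + (1 - t) • y)
        ≤ t * f x + (1 - t) * f y - α * (t * (1 - t)) / 2 * ‖y - x‖ ^ 2)
    (L : ℝ) (hLip : ∀ x y, ‖f' y - f' x‖ ≤ L * ‖y - x‖)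
    (A : Matrix (Fin q) (Fin n) ℝ)
    (hA : LinearIndependent ℝ A)
    (b : EuclideanSpace ℝ (Fin q))
    (xmin : EuclideanSpace ℝ (Fin q) → EuclideanSpace ℝ (Fin n))
    (hxmin : ∀ lam x,
      f (xmin lam) + ∑ i, lam i * (A.mulVec (xmin lam) i - b i)
        ≤ f x + ∑ i, lam i * (A.mulVec x i - b i))
    (θ : EuclideanSpace ℝ (Fin q) → EReal)
    (hθ : θ = fun lam => ⨅ x : EuclideanSpace ℝ (Fin n),
      ((f x + ∑ i, lam i * (A.mulVec x i - b i) : ℝ) : EReal)) :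
    (∀ lam : EuclideanSpace ℝ (Fin q),
      ∃ hpd : (A * (Hess (xmin lam))⁻¹ * Aᵀ).PosDef,
        lambdaMin (A * (Hess (xmin lam))⁻¹ * Aᵀ) hpd.1
          ≤ lambdaMin (A * Aᵀ) (Matrix.isHermitian_mul_conjTranspose_self A) / α) ∧
    (∀ β : ℝ, 0 < β →
      (∀ l1 l2 : EuclideanSpace ℝ (Fin q), ∀ r1 r2 : ℝ,
        θ l1 = (r1 : EReal) → θ l2 = (r2 : EReal) →
        ∀ t : ℝ, 0 ≤ t → t ≤ 1 →
        ((t * r1 + (1 - t) * r2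
          + β * (t * (1 - t)) / 2 * ‖l1 - l2‖ ^ 2 : ℝ) : EReal)
          ≤ θ (t • l1 + (1 - t) • l2)) →
      β ≤ lambdaMin (A * Aᵀ) (Matrix.isHermitian_mul_conjTranspose_self A) / α) := by
  classical
  have hninst : Nonempty (Fin q) := ⟨⟨0, hq⟩⟩
  obtain ⟨u₀, hu₀norm, hu₀sum⟩ := exists_unit_eigvec hq A
  -- the transpose map kills no nonzero vector
  have hAT : ∀ v : Fin q → ℝ, v ≠ 0 → Aᵀ.mulVec v ≠ 0 := by
    intro v hv h0
    apply hv
    have hsum : ∑ i, v i • A i = 0 := by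
      funext j
      simp only [Finset.sum_apply, Pi.smul_apply, smul_eq_mul, Pi.zero_apply]
      have h3 : Aᵀ.mulVec v j = 0 := by rw [h0]; rfl
      rw [show Aᵀ.mulVec v j = ∑ i, A i j * v i from by
        simp [Matrix.mulVec, dotProduct, Matrix.transpose_apply]] at h3
      rw [← h3]
      apply Finset.sum_congr rfl; intros; ring
    have := Fintype.linearIndependent_iff.1 hA v hsum
    funext i; exact this i
  -- dot product transformation
  have hdot : ∀ (Q : Matrix (Fin n) (Fin n) ℝ) (v : Fin q → ℝ),
      dotProduct v ((A * Q * Aᵀ).mulVec v)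
        = dotProduct (Aᵀ.mulVec v) (Q.mulVec (Aᵀ.mulVec v)) := by
    intro Q v
    rw [Matrix.mul_assoc, ← Matrix.mulVec_mulVec, Matrix.dotProduct_mulVec v,
      ← Matrix.mulVec_transpose, ← Matrix.mulVec_mulVec]
  -- minimum of f itself
  set x₀ := xmin 0 with hx₀
  have hminf : ∀ x, f x₀ ≤ f x := by
    intro x
    have := hxmin 0 x
    simpa using this
  have hquad : ∀ x, f x₀ + α/2 * ‖x - x₀‖^2 ≤ f x := min_quad f α hα hsc x₀ hminf
  have hglow := grad_lower f f' hgrad α hsc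
  have hlow := hess_lower f f' Hess hhess α hglow
  constructor
  · -- Part 1
    intro lam
    set M := Hess (xmin lam) with hM
    have hherm : M.IsHermitian := hess_herm f f' Hess hgrad hhess _
    have hMpd : M.PosDef := by
      refine Matrix.PosDef.of_dotProduct_mulVec_pos hherm fun v hv => ?_
      have hsv : star v = v := by funext k; simp
      rw [hsv]
      have h1 := hlow (xmin lam) ((WithLp.equiv 2 (Fin n → ℝ)).symm v)
      have h2 : (0:ℝ) < ‖(WithLp.equiv 2 (Fin n → ℝ)).symm v‖ := by
        rw [norm_pos_iff]
        exact fun hh => hv (by simpa using congrArg WithLp.ofLp hh)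
      calc (0:ℝ) < α * ‖(WithLp.equiv 2 (Fin n → ℝ)).symm v‖^2 := by positivity
        _ ≤ ∑ j, v j * M.mulVec v j := h1
        _ = dotProduct v (M.mulVec v) := rfl
    have hMinv : M⁻¹.PosDef := hMpd.inv
    have hdet : IsUnit M.det := isUnit_iff_ne_zero.2 (ne_of_gt hMpd.det_pos)
    have hPherm : (A * M⁻¹ * Aᵀ).IsHermitian := by
      have h := Matrix.isHermitian_mul_mul_conjTranspose A hMinv.1
      rwa [Matrix.conjTranspose_eq_transpose_of_trivial] at h
    have hpd : (A * M⁻¹ * Aᵀ).PosDef := by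
      refine Matrix.PosDef.of_dotProduct_mulVec_pos hPherm fun v hv => ?_
      have hsv : star v = v := by funext k; simp
      rw [hsv, hdot]
      have hw := hAT v hv
      have := hMinv.dotProduct_mulVec_pos hw
      have hsw : star (Aᵀ.mulVec v) = Aᵀ.mulVec v := by funext k; simp
      rwa [hsw] at this
    refine ⟨hpd, ?_⟩
    -- Rayleigh bound at u₀
    have hray := rayleigh_lower hq (A * M⁻¹ * Aᵀ) hpd.1 u₀
    rw [hu₀norm, one_pow, mul_one] at hray
    have hsum1 : ∑ j, u₀ j * (A * M⁻¹ * Aᵀ).mulVec u₀ j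
        = dotProduct (Aᵀ.mulVec (u₀ : Fin q → ℝ)) (M⁻¹.mulVec (Aᵀ.mulVec u₀)) := by
      rw [← hdot]; rfl
    -- bound the inverse quadratic form
    set w := Aᵀ.mulVec (u₀ : Fin q → ℝ) with hw
    set z := M⁻¹.mulVec w with hz
    have hMz : M.mulVec z = w := by
      rw [hz, Matrix.mulVec_mulVec, Matrix.mul_nonsing_inv _ hdet, Matrix.one_mulVec]
    have h1 : α * ∑ j, z j^2 ≤ ∑ j, z j * w j := by
      have := hlow (xmin lam) (WithLp.toLp 2 z)
      rw [euclid_norm_sq] at this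
      rw [show M.mulVec (WithLp.toLp 2 z).ofLp = w from hMz] at this
      exact this
    have hcs : (∑ j, w j * z j)^2 ≤ (∑ j, w j^2) * (∑ j, z j^2) :=
      Finset.sum_mul_sq_le_sq_mul_sq _ _ _
    have hzw : ∑ j, z j * w j = ∑ j, w j * z j := by
      apply Finset.sum_congr rfl; intros; ring
    rw [hzw] at h1
    have hwz_nonneg : 0 ≤ ∑ j, w j * z j := by
      have hznn : 0 ≤ ∑ j, z j^2 := Finset.sum_nonneg fun j _ => sq_nonneg _
      nlinarith
    have hbound : ∑ j, w j * z j ≤ (∑ j, w j^2)/α := by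
      rw [le_div_iff₀ hα]
      have hznn : 0 ≤ ∑ j, z j^2 := Finset.sum_nonneg fun j _ => sq_nonneg _
      have hwnn : 0 ≤ ∑ j, w j^2 := Finset.sum_nonneg fun j _ => sq_nonneg _
      rcases eq_or_lt_of_le hwz_nonneg with he | hpos
      · rw [← he]
        nlinarith
      · have hA1 : α * ((∑ j, w j * z j)^2) ≤ α * ((∑ j, w j^2) * ∑ j, z j^2) :=
          mul_le_mul_of_nonneg_left hcs (le_of_lt hα)
        have hA2 : (∑ j, w j^2) * (α * ∑ j, z j^2) ≤ (∑ j, w j^2) * ∑ j, w j * z j :=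
          mul_le_mul_of_nonneg_left h1 hwnn
        have h5 : α * (∑ j, w j * z j)^2 ≤ (∑ j, w j^2) * ∑ j, w j * z j := by nlinarith
        have h6 : (∑ j, w j * z j) * ((∑ j, w j * z j) * α)
            ≤ (∑ j, w j * z j) * (∑ j, w j^2) := by nlinarith [h5]
        have h7 := (mul_le_mul_iff_of_pos_left hpos).1 h6
        linarith
    have hdotwz : dotProduct w z = ∑ j, w j * z j := rfl
    calc lambdaMin (A * M⁻¹ * Aᵀ) hpd.1
        ≤ ∑ j, u₀ j * (A * M⁻¹ * Aᵀ).mulVec u₀ j := hray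
      _ = dotProduct w z := by rw [hsum1]
      _ ≤ (∑ j, w j^2)/α := by rw [hdotwz]; exact hbound
      _ = lambdaMin (A * Aᵀ) (Matrix.isHermitian_mul_conjTranspose_self A) / α := by
          rw [← hu₀sum]
  · -- Part 2
    intro β hβ hconc
    set θv : EuclideanSpace ℝ (Fin q) → ℝ :=
      fun lam => f (xmin lam) + ∑ i, lam i * (A.mulVec (xmin lam) i - b i) with hθv
    have hreal : ∀ lam, θ lam = ((θv lam : ℝ) : EReal) := by
      intro lam
      rw [hθ]
      apply le_antisymm
      · exact iInf_le _ (xmin lam)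
      · exact le_iInf fun x => EReal.coe_le_coe_iff.2 (hxmin lam x)
    have hθ0 : θv 0 = f x₀ := by
      rw [hθv, hx₀]
      simp
    have key : ∀ d : EuclideanSpace ℝ (Fin q),
        β * ‖d‖^2 ≤ (∑ j, (Aᵀ.mulVec d) j^2)/α := by
      intro d
      set Gs := ∑ i, d i * (A.mulVec x₀ i - b i) with hGs
      set K := (∑ j, (Aᵀ.mulVec (d : Fin q → ℝ)) j ^2)/(2*α) with hK
      have hKnn : 0 ≤ K := by
        rw [hK]
        have : 0 ≤ ∑ j, (Aᵀ.mulVec (d : Fin q → ℝ)) j ^2 :=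
          Finset.sum_nonneg fun j _ => sq_nonneg _
        positivity
      have hupper : ∀ s : ℝ, θv (s • d) ≤ f x₀ + s * Gs := by
        intro s
        have h := hxmin (s • d) x₀
        calc θv (s • d) ≤ f x₀ + ∑ i, (s • d) i * (A.mulVec x₀ i - b i) := h
          _ = f x₀ + s * Gs := by
              rw [hGs, Finset.mul_sum]
              congr 1
              apply Finset.sum_congr rfl; intros i _
              show s * d i * (A.mulVec x₀ i - b i) = _
              ring
      have hlower : θv 0 + Gs - K ≤ θv d := by
        set x2 := xmin d with hx2
        have hf2 : f x₀ + α/2 * ‖x2 - x₀‖^2 ≤ f x2 := hquad x2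
        have hlin : ∑ i, d i * (A.mulVec x2 i - b i)
            = Gs + ∑ j, (Aᵀ.mulVec (d : Fin q → ℝ)) j * (x2 - x₀) j := by
          have e1 : ∑ i, d i * (A.mulVec x2 i - b i)
              = ∑ i, (d i * (A.mulVec x₀ i - b i) + d i * (A.mulVec (x2 - x₀) i)) := by
            apply Finset.sum_congr rfl; intros i _
            rw [show A.mulVec (x2.ofLp - x₀.ofLp)
                = A.mulVec x2 - A.mulVec x₀ from Matrix.mulVec_sub A _ _]
            show d i * (A.mulVec x2 i - b i)
              = d i * (A.mulVec x₀ i - b i) + d i * (A.mulVec x2 i - A.mulVec x₀ i)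
            ring
          rw [e1, Finset.sum_add_distrib, ← hGs]
          congr 1
          have e2 : ∑ i, d i * (A.mulVec (x2 - x₀) i)
              = dotProduct (d : Fin q → ℝ) (A.mulVec (x2 - x₀)) := rfl
          rw [e2, Matrix.dotProduct_mulVec, ← Matrix.mulVec_transpose]
          rfl
        have hquad2 : -K ≤ α/2 * ‖x2 - x₀‖^2
            + ∑ j, (Aᵀ.mulVec (d : Fin q → ℝ)) j * (x2 - x₀) j := by
          set uu : EuclideanSpace ℝ (Fin n) := x2 - x₀ with huu
          set w := Aᵀ.mulVec (d : Fin q → ℝ) with hwd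
          have hnormsq : ‖uu‖^2 = ∑ j, uu j^2 := euclid_norm_sq uu
          have h0 : 0 ≤ ∑ j, (α * uu j + w j)^2 :=
            Finset.sum_nonneg fun j _ => sq_nonneg _
          have hexp : ∑ j, (α * uu j + w j)^2
              = α^2 * (∑ j, uu j^2) + 2*α*(∑ j, w j * uu j) + ∑ j, w j^2 := by
            rw [Finset.mul_sum, Finset.mul_sum, ← Finset.sum_add_distrib,
              ← Finset.sum_add_distrib]
            apply Finset.sum_congr rfl; intros; ring
          rw [hexp] at h0
          have hα2 : (0:ℝ) < 2*α := by linarith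
          rw [hnormsq, hK, neg_le, le_div_iff₀ hα2]
          nlinarith [h0]
        calc θv 0 + Gs - K = f x₀ + Gs - K := by rw [hθ0]
          _ ≤ f x₀ + Gs + (α/2 * ‖x2 - x₀‖^2
              + ∑ j, (Aᵀ.mulVec (d : Fin q → ℝ)) j * (x2 - x₀) j) := by linarith [hquad2]
          _ = (f x₀ + α/2 * ‖x2 - x₀‖^2)
              + (Gs + ∑ j, (Aᵀ.mulVec (d : Fin q → ℝ)) j * (x2 - x₀) j) := by ring
          _ ≤ f x2 + (Gs + ∑ j, (Aᵀ.mulVec (d : Fin q → ℝ)) j * (x2 - x₀) j) := by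
              linarith [hf2]
          _ = f x2 + ∑ i, d i * (A.mulVec x2 i - b i) := by rw [← hlin]
          _ = θv d := rfl
      -- now the contradiction argument
      by_contra hcon
      push_neg at hcon
      set D := ‖d‖^2 with hD
      have hD0 : 0 ≤ D := sq_nonneg _
      have h2K : (∑ j, (Aᵀ.mulVec (d : Fin q → ℝ)) j^2)/α = 2*K := by
        rw [hK]; field_simp
      rw [h2K] at hcon
      have hDpos : 0 < D := by
        rcases lt_or_eq_of_le hD0 with h | h
        · exact h
        · exfalso; rw [← h] at hcon; simp at hcon; linarith
      have hβD' : 0 < β * D := mul_pos hβ hDpos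
      set t := (2*K + β*D)/(2*(β*D)) with htdef
      have ht0 : 0 ≤ t := div_nonneg (by linarith) (by linarith)
      have ht1 : t ≤ 1 := by
        rw [htdef, div_le_one (by linarith)]
        linarith
      have hcc := hconc 0 d (θv 0) (θv d) (hreal 0) (hreal d) t ht0 ht1
      have harg : (t • (0:EuclideanSpace ℝ (Fin q)) + (1-t) • d) = (1-t) • d := by
        rw [smul_zero, zero_add]
      rw [harg, hreal ((1-t) • d)] at hcc
      have hrr := EReal.coe_le_coe_iff.1 hcc
      have hnd : ‖(0:EuclideanSpace ℝ (Fin q)) - d‖ = ‖d‖ := by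
        rw [zero_sub, norm_neg]
      rw [hnd] at hrr
      have hup := hupper (1-t)
      rw [← hD] at hrr
      have h1mt : 0 < 1 - t := by
        rw [htdef, sub_pos, div_lt_one (by linarith)]
        linarith
      clear_value t D K Gs θv x₀
      have hmain : β*(t*(1-t))/2*D ≤ (1-t)*K := by
        rw [hθ0] at hrr hlower
        have h8 : (1-t) * (f x₀ + Gs - K) ≤ (1-t) * θv d :=
          mul_le_mul_of_nonneg_left hlower (le_of_lt h1mt)
        nlinarith [hrr, hup, h8]
      have hmain2 : β*t*D/2 ≤ K := by
        have hre : β*(t*(1-t))/2*D = (1-t)*(β*t*D/2) := by ring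
        rw [hre] at hmain
        exact (mul_le_mul_iff_of_pos_left h1mt).1 hmain
      have ht' : t * (2*(β*D)) = 2*K + β*D := by
        rw [htdef]; field_simp
      nlinarith [hmain2, ht', hcon]
    have hkey := key u₀
    rw [hu₀norm, one_pow, mul_one, hu₀sum] at hkey
    exact hkey
end
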